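/- arXiv:1210.6521 — 15 statements merged into one kernel-verified Lean document; each statement's English description precedes it below -/
import Mathlib

section
/- C_{∞P}(X), the set of all f ∈ C(X) such that for every natural number n the set {x : |f(x)| < 1/n} contains an element of P, is a proper subring of C(X). -/
/-- `C_{∞P}(X)` is a proper (non-unital) subring of `C(X)`. -/
theorem cInfP_proper_subring {X : Type*} [TopologicalSpace X] [T2Space X]
    [CompletelyRegularSpace X]
    (P : Set (Set X)) (hne : P.Nonempty)
    (hopen : ∀ A ∈ P, IsOpen A) (hAne : ∀ A ∈ P, A.Nonempty)
    (hbase : ∀ A ∈ P, ∀ B ∈ P, ∃ C ∈ P, C ⊆ A ∩ B) :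
    ∃ S : NonUnitalSubring (ContinuousMap X ℝ),
      (S : Set (ContinuousMap X ℝ)) =
        {f : ContinuousMap X ℝ | ∀ n : ℕ, ∃ A ∈ P, A ⊆ {x | |f x| < (1 : ℝ) / (n + 1)}} ∧
      (S : Set (ContinuousMap X ℝ)) ≠ Set.univ := by
  have hpos : ∀ n : ℕ, (0:ℝ) < 1 / (n + 1) := by
    intro n; positivity
  refine ⟨{
    carrier := {f : ContinuousMap X ℝ | ∀ n : ℕ, ∃ A ∈ P, A ⊆ {x | |f x| < (1 : ℝ) / (n + 1)}}
    zero_mem' := by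
      intro n
      obtain ⟨A, hA⟩ := hne
      exact ⟨A, hA, fun x _ => by simpa using hpos n⟩
    add_mem' := by
      intro f g hf hg n
      obtain ⟨A, hA, hAf⟩ := hf (2 * n + 1)
      obtain ⟨B, hB, hBg⟩ := hg (2 * n + 1)
      obtain ⟨C, hC, hCsub⟩ := hbase A hA B hB
      refine ⟨C, hC, fun x hx => ?_⟩
      have h1 := hAf (hCsub hx).1
      have h2 := hBg (hCsub hx).2
      simp only [Set.mem_setOf_eq] at h1 h2 ⊢
      have : ((2 * n + 1 : ℕ) : ℝ) + 1 = 2 * ((n : ℝ) + 1) := by push_cast; ring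
      rw [this] at h1 h2
      calc |(f + g) x| ≤ |f x| + |g x| := by simp [abs_add_le]
        _ < 1 / (2 * ((n:ℝ)+1)) + 1 / (2 * ((n:ℝ)+1)) := add_lt_add h1 h2
        _ = 1 / ((n:ℝ)+1) := by rw [← add_div, div_eq_div_iff (by positivity) (by positivity)]; ring
    neg_mem' := by
      intro f hf n
      obtain ⟨A, hA, hAf⟩ := hf n
      exact ⟨A, hA, fun x hx => by simpa using hAf hx⟩
    mul_mem' := by
      intro f g hf hg n
      obtain ⟨A, hA, hAf⟩ := hf n
      obtain ⟨B, hB, hBg⟩ := hg 0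
      obtain ⟨C, hC, hCsub⟩ := hbase A hA B hB
      refine ⟨C, hC, fun x hx => ?_⟩
      have h1 := hAf (hCsub hx).1
      have h2 := hBg (hCsub hx).2
      simp only [Set.mem_setOf_eq] at h1 h2 ⊢
      have h2' : |g x| < 1 := by simpa using h2
      calc |(f * g) x| = |f x| * |g x| := by simp [abs_mul]
        _ ≤ |f x| * 1 := by
            exact mul_le_mul_of_nonneg_left (le_of_lt h2') (abs_nonneg _)
        _ = |f x| := mul_one _
        _ < 1 / ((n:ℝ)+1) := h1
  }, rfl, ?_⟩
  intro h
  have h1 : (1 : ContinuousMap X ℝ) ∈ ({f : ContinuousMap X ℝ | ∀ n : ℕ, ∃ A ∈ P, A ⊆ {x | |f x| < (1 : ℝ) / (n + 1)}} : Set _) := by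
    rw [show ({f : ContinuousMap X ℝ | ∀ n : ℕ, ∃ A ∈ P, A ⊆ {x | |f x| < (1 : ℝ) / (n + 1)}} : Set _) = Set.univ from h]
    trivial
  obtain ⟨A, hA, hsub⟩ := h1 1
  obtain ⟨x, hx⟩ := hAne A hA
  have := hsub hx
  simp only [Set.mem_setOf_eq, ContinuousMap.one_apply] at this
  norm_num at this
end

section
/- For every open filter base P there exists an ideal P' of closed sets in X (closed under finite unions and closed subsets) such that C^P(X) = C_{P'}(X) and C_{∞P}(X) = C_∞^{P'}(X), where C_{P'}(X) = {f ∈ C(X) : cl(X∖Z(f)) ∈ P'} and C_∞^{P'}(X) = {f ∈ C(X) : {x : |f(x)| ≥ 1/n} ∈ P' for all n ∈ ℕ}. -/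
/-- for every open filter base `P` there is an ideal `P'` of closed sets with
`C^P(X) = C_{P'}(X)` and `C_{∞P}(X) = C_∞^{P'}(X)`. -/
theorem exists_closed_ideal {X : Type*} [TopologicalSpace X] [T2Space X]
    [CompletelyRegularSpace X]
    (P : Set (Set X)) (hne : P.Nonempty)
    (hopen : ∀ A ∈ P, IsOpen A) (hAne : ∀ A ∈ P, A.Nonempty)
    (hbase : ∀ A ∈ P, ∀ B ∈ P, ∃ C ∈ P, C ⊆ A ∩ B) :
    ∃ P' : Set (Set X),
      (∀ A ∈ P', IsClosed A) ∧
      (∀ A ∈ P', ∀ B ∈ P', A ∪ B ∈ P') ∧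
      (∀ A ∈ P', ∀ B, B ⊆ A → IsClosed B → B ∈ P') ∧
      ({f : ContinuousMap X ℝ | ∃ A ∈ P, A ⊆ {x | f x = 0}} =
        {f : ContinuousMap X ℝ | closure {x | f x = 0}ᶜ ∈ P'}) ∧
      ({f : ContinuousMap X ℝ | ∀ n : ℕ, ∃ A ∈ P, A ⊆ {x | |f x| < 1 / (n + 1)}} =
        {f : ContinuousMap X ℝ | ∀ n : ℕ, {x | 1 / (n + 1) ≤ |f x|} ∈ P'}) := by
  refine ⟨{F | IsClosed F ∧ ∃ A ∈ P, F ⊆ Aᶜ}, fun A hA => hA.1, ?_, ?_, ?_, ?_⟩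
  · rintro F ⟨hF, A, hA, hFA⟩ G ⟨hG, B, hB, hGB⟩
    obtain ⟨C, hC, hCAB⟩ := hbase A hA B hB
    refine ⟨hF.union hG, C, hC, ?_⟩
    rintro x (h | h) hxC
    · exact hFA h (hCAB hxC).1
    · exact hGB h (hCAB hxC).2
  · rintro F ⟨hF, A, hA, hFA⟩ B hBF hB
    exact ⟨hB, A, hA, hBF.trans hFA⟩
  · ext f
    constructor
    · rintro ⟨A, hA, hAZ⟩
      refine ⟨isClosed_closure, A, hA, ?_⟩
      exact closure_minimal (Set.compl_subset_compl.mpr hAZ) (hopen A hA).isClosed_compl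
    · rintro ⟨_, A, hA, hsub⟩
      refine ⟨A, hA, fun x hx => ?_⟩
      by_contra h
      exact hsub (subset_closure h) hx
  · ext f
    constructor
    · rintro h n
      obtain ⟨A, hA, hAf⟩ := h n
      refine ⟨isClosed_le continuous_const f.continuous.abs, A, hA, fun x hx hxA => ?_⟩
      have h1 : |f x| < 1 / (n + 1) := hAf hxA
      have h2 : 1 / (n + 1 : ℝ) ≤ |f x| := hx
      linarith
    · rintro h n
      obtain ⟨_, A, hA, hsub⟩ := h n
      refine ⟨A, hA, fun x hx => ?_⟩
      by_contra hc
      exact hsub (show 1 / (n + 1 : ℝ) ≤ |f x| from not_lt.mp hc) hx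
end

section
/- If X is a non-Lindelöf completely regular Hausdorff space and P is the collection of open subsets A ⊆ X with X∖A Lindelöf, then C_{∞P}(X) = {f ∈ C(X) : X∖Z(f) is a Lindelöf subspace of X}. -/
/-- for `P` the open sets with Lindelöf complement in a non-Lindelöf space,
`C_{∞P}(X)` is the set of `f` with `X∖Z(f)` Lindelöf. -/
theorem cInfP_lindelof {X : Type*} [TopologicalSpace X] [T2Space X]
    [CompletelyRegularSpace X] (hX : ¬ LindelofSpace X) :
    {f : ContinuousMap X ℝ | ∀ n : ℕ,
        ∃ A ∈ {A : Set X | IsOpen A ∧ IsLindelof Aᶜ}, A ⊆ {x | |f x| < 1 / (n + 1)}} =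
      {f : ContinuousMap X ℝ | IsLindelof {x | f x = 0}ᶜ} := by
  ext f
  simp only [Set.mem_setOf_eq]
  constructor
  · intro h
    choose A hA hsub using h
    have key : {x | f x = 0}ᶜ = ⋃ n : ℕ, ({x | |f x| < 1 / (n + 1)}ᶜ ∩ (A n)ᶜ) := by
      ext x
      simp only [Set.mem_compl_iff, Set.mem_setOf_eq, Set.mem_iUnion, Set.mem_inter_iff]
      constructor
      · intro hx
        have hpos : 0 < |f x| := abs_pos.mpr hx
        obtain ⟨n, hn⟩ := exists_nat_one_div_lt hpos
        refine ⟨n, not_lt.mpr hn.le, fun hxa => ?_⟩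
        exact absurd (hsub n hxa) (not_lt.mpr hn.le)
      · rintro ⟨n, hn, -⟩
        intro hx
        apply hn
        simp [hx]
        positivity
    rw [key]
    apply isLindelof_iUnion
    intro n
    exact (hA n).2.inter_left (isOpen_lt (continuous_abs.comp f.continuous) continuous_const).isClosed_compl
  · intro h n
    refine ⟨{x | |f x| < 1 / (n + 1)}, ⟨?_, ?_⟩, subset_rfl⟩
    · exact isOpen_lt (continuous_abs.comp f.continuous) continuous_const
    · apply h.of_isClosed_subset
      · exact (isOpen_lt (continuous_abs.comp f.continuous) continuous_const).isClosed_compl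
      · intro x hx
        simp only [Set.mem_compl_iff, Set.mem_setOf_eq, not_lt] at hx ⊢
        intro h0
        rw [h0] at hx
        simp at hx
        have : (0:ℝ) < 1 / (n+1) := by positivity
        linarith
end

section
/- If every element of the open filter base P has Lindelöf complement in X, then C_{∞P}(X) is contained in the intersection of all free real maximal ideals of C(X); equivalently, every f ∈ C_{∞P}(X) lies in M^p for every p ∈ υX∖X. -/
/-- if every member of `P` has Lindelöf complement, then `C_{∞P}(X)` is
contained in every free real maximal ideal of `C(X)` (realness expressed via the countable
intersection property of its zero sets). -/
theorem cInfP_subset_free_real_maximal {X : Type*} [TopologicalSpace X] [T2Space X]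
    [CompletelyRegularSpace X]
    (P : Set (Set X)) (hne : P.Nonempty)
    (hopen : ∀ A ∈ P, IsOpen A) (hAne : ∀ A ∈ P, A.Nonempty)
    (hbase : ∀ A ∈ P, ∀ B ∈ P, ∃ C ∈ P, C ⊆ A ∩ B)
    (hLind : ∀ A ∈ P, IsLindelof Aᶜ) :
    ∀ f ∈ {f : ContinuousMap X ℝ | ∀ n : ℕ, ∃ A ∈ P, A ⊆ {x | |f x| < 1 / (n + 1)}},
      ∀ M : Ideal (ContinuousMap X ℝ), M.IsMaximal →
        (⋂ g ∈ M, {x | g x = 0}) = ∅ →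
        (∀ s : ℕ → ContinuousMap X ℝ, (∀ n, s n ∈ M) →
          (⋂ n, {x | s n x = 0}).Nonempty) →
        f ∈ M := by
  intro f hf M hM hfree hcip
  by_contra hfM
  obtain ⟨b, m, hmM, hbm⟩ := hM.exists_inv hfM
  -- for each point, choose an element of M not vanishing there
  have hsel : ∀ x : X, ∃ g : ContinuousMap X ℝ, g ∈ M ∧ g x ≠ 0 := by
    intro x
    by_contra h
    push_neg at h
    have hx : x ∈ ⋂ g ∈ M, {x | g x = 0} := by
      simp only [Set.mem_iInter, Set.mem_setOf_eq]
      exact fun g hg => h g hg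
    rw [hfree] at hx
    exact hx
  choose g hgM hgx using hsel
  -- choose the sets A n
  choose A hAP hAsub using hf
  -- countable subcovers of the Lindelöf complements
  have hcov : ∀ n : ℕ, ∃ t : Set X, t.Countable ∧
      (A n)ᶜ ⊆ ⋃ x ∈ t, {y | g x y ≠ 0} := by
    intro n
    refine (hLind (A n) (hAP n)).elim_countable_subcover
      (fun x => {y | g x y ≠ 0}) (fun x => ?_) ?_
    · exact isOpen_compl_singleton.preimage (g x).continuous
    · intro y _
      exact Set.mem_iUnion.2 ⟨y, hgx y⟩
  choose t htc htcov using hcov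
  -- the countable family in M
  set T : Set (ContinuousMap X ℝ) := insert m (⋃ n, g '' t n) with hT
  have hTc : T.Countable :=
    (Set.countable_iUnion fun n => (htc n).image g).insert m
  have hTne : T.Nonempty := ⟨m, Set.mem_insert _ _⟩
  obtain ⟨s, hs⟩ := hTc.exists_eq_range hTne
  have hsM : ∀ n, s n ∈ M := by
    intro n
    have : s n ∈ T := hs ▸ Set.mem_range_self n
    rcases this with h | h
    · exact h ▸ hmM
    · obtain ⟨k, hk⟩ := Set.mem_iUnion.1 h
      obtain ⟨x, _, hx⟩ := hk
      exact hx ▸ hgM x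
  obtain ⟨x0, hx0⟩ := hcip s hsM
  simp only [Set.mem_iInter, Set.mem_setOf_eq] at hx0
  have hTzero : ∀ h ∈ T, h x0 = 0 := by
    intro h hh
    rw [hs] at hh
    obtain ⟨n, rfl⟩ := hh
    exact hx0 n
  have hm0 : m x0 = 0 := hTzero m (Set.mem_insert _ _)
  -- x0 lies in every A n, hence |f x0| < 1/(n+1) for all n, hence f x0 = 0
  have hfA : ∀ n : ℕ, |f x0| < 1 / (n + 1) := by
    intro n
    have hx0A : x0 ∈ A n := by
      by_contra hx0A
      obtain ⟨y, hyt, hy⟩ := Set.mem_iUnion₂.1 (htcov n hx0A)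
      exact hy (hTzero (g y) (Set.mem_insert_of_mem _
        (Set.mem_iUnion.2 ⟨n, Set.mem_image_of_mem g hyt⟩)))
    exact hAsub n hx0A
  have hf0 : f x0 = 0 := by
    by_contra hf0
    obtain ⟨n, hn⟩ := exists_nat_one_div_lt (abs_pos.2 hf0)
    have := hfA n
    push_cast at this hn
    linarith
  have := ContinuousMap.congr_fun hbm x0
  simp only [ContinuousMap.add_apply, ContinuousMap.mul_apply,
    ContinuousMap.one_apply, hf0, hm0, mul_zero, add_zero] at this
  exact zero_ne_one this
end

section
/- Let X be an infinite completely regular Hausdorff space and P = {A ⊊ X : X∖A finite}. Then C_{∞P}(X) = C_F(X) (the functions with finite support, i.e. X∖Z(f) finite) if and only if the set of isolated points of X is finite. -/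
open Topology Filter

/-- for `P` the cofinite proper open sets of an infinite space,
`C_{∞P}(X) = C_F(X)` iff the set of isolated points of `X` is finite. -/
theorem cInfP_eq_cF_iff {X : Type*} [TopologicalSpace X] [T2Space X]
    [CompletelyRegularSpace X] [Infinite X] :
    ({f : ContinuousMap X ℝ | ∀ n : ℕ,
        ∃ A ∈ {A : Set X | A ≠ Set.univ ∧ Aᶜ.Finite}, A ⊆ {x | |f x| < 1 / (n + 1)}} =
      {f : ContinuousMap X ℝ | ({x | f x = 0}ᶜ).Finite}) ↔
    {x : X | IsOpen ({x} : Set X)}.Finite := by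
  constructor
  · -- equality → isolated points finite
    intro hEq
    by_contra hinf
    have hinf' : {x : X | IsOpen ({x} : Set X)}.Infinite := hinf
    set S := {x : X | IsOpen ({x} : Set X)} with hS
    obtain ⟨e⟩ : Nonempty (ℕ ↪ S) := ⟨hinf'.natEmbedding _⟩
    set ι : ℕ → X := fun k => (e k : X) with hι
    have hinj : Function.Injective ι := Subtype.val_injective.comp e.injective
    set g : X → ℝ := Function.extend ι (fun k => 1 / (k + 1 : ℝ)) 0 with hg
    have hgι : ∀ k, g (ι k) = 1 / (k + 1 : ℝ) := fun k => hinj.extend_apply _ _ _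
    have hg0 : ∀ x, x ∉ Set.range ι → g x = 0 := by
      intro x hx
      exact Function.extend_apply' _ _ _ (by simpa [Set.range] using hx)
    have hgcont : Continuous g := by
      rw [continuous_iff_continuousAt]
      intro x
      by_cases hx : x ∈ Set.range ι
      · obtain ⟨k, rfl⟩ := hx
        have hopen : IsOpen ({ι k} : Set X) := (e k).2
        have hpure : 𝓝 (ι k) = pure (ι k) :=
          le_antisymm (le_pure_iff.mpr (hopen.mem_nhds rfl)) (pure_le_nhds _)
        unfold ContinuousAt
        rw [hpure]
        exact tendsto_pure_nhds g _
      · have hx0 : g x = 0 := hg0 x hx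
        unfold ContinuousAt
        rw [hx0, Metric.tendsto_nhds]
        intro ε hε
        obtain ⟨N, hN⟩ := exists_nat_gt (1 / ε)
        have hNε : (1 : ℝ) / (N + 1) < ε := by
          rw [div_lt_iff₀ (by positivity)]
          rw [div_lt_iff₀ hε] at hN
          nlinarith
        have hF : (ι '' Set.Iio N).Finite := (Set.finite_Iio N).image ι
        have hxF : x ∉ ι '' Set.Iio N := fun ⟨k, _, hk⟩ => hx ⟨k, hk⟩
        filter_upwards [hF.isClosed.isOpen_compl.mem_nhds hxF] with y hy
        rw [Real.dist_eq, sub_zero]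
        by_cases hy' : y ∈ Set.range ι
        · obtain ⟨k, rfl⟩ := hy'
          have hk : N ≤ k := by
            by_contra hk
            exact hy ⟨k, Set.mem_Iio.mpr (by omega), rfl⟩
          rw [hgι]
          have h1 : (1 : ℝ) / (k + 1) ≤ 1 / (N + 1) := by
            apply one_div_le_one_div_of_le (by positivity)
            exact_mod_cast (by omega : N + 1 ≤ k + 1)
          rw [abs_of_pos (by positivity)]
          linarith
        · rw [hg0 y hy', abs_zero]; exact hε
    set f : ContinuousMap X ℝ := ⟨g, hgcont⟩ with hf
    have hfmem : f ∈ {f : ContinuousMap X ℝ | ∀ n : ℕ,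
        ∃ A ∈ {A : Set X | A ≠ Set.univ ∧ Aᶜ.Finite}, A ⊆ {x | |f x| < 1 / (n + 1)}} := by
      intro n
      refine ⟨(ι '' Set.Iic n)ᶜ, ⟨?_, by simp [(Set.finite_Iic n).image ι]⟩, ?_⟩
      · intro h
        have : ι 0 ∈ (ι '' Set.Iic n)ᶜ := h ▸ Set.mem_univ _
        exact this ⟨0, by simp⟩
      · intro x hx
        simp only [Set.mem_setOf_eq]
        by_cases hx' : x ∈ Set.range ι
        · obtain ⟨k, rfl⟩ := hx'
          have hk : n < k := by
            by_contra hk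
            exact hx ⟨k, Set.mem_Iic.mpr (by omega), rfl⟩
          show |g (ι k)| < _
          rw [hgι, abs_of_pos (by positivity)]
          apply div_lt_div_of_pos_left one_pos (by positivity)
          exact_mod_cast (by omega : n + 1 < k + 1)
        · show |g x| < _
          rw [hg0 x hx', abs_zero]
          positivity
    rw [hEq] at hfmem
    have : Set.range ι ⊆ {x | f x = 0}ᶜ := by
      rintro _ ⟨k, rfl⟩
      show ¬ (g (ι k) = 0)
      rw [hgι]
      positivity
    exact (Set.infinite_range_of_injective hinj) (hfmem.subset this)
  · -- isolated points finite → equality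
    intro hiso
    ext f
    simp only [Set.mem_setOf_eq]
    constructor
    · intro hf
      have hsub : {x | f x = 0}ᶜ ⊆ {x : X | IsOpen ({x} : Set X)} := by
        intro x hx
        have hfx : (0:ℝ) < |f x| := abs_pos.mpr hx
        obtain ⟨n, hn⟩ := exists_nat_gt (1 / |f x|)
        have h1 : (1 : ℝ) / (n + 1) < |f x| := by
          rw [div_lt_iff₀ (by positivity)]
          rw [div_lt_iff₀ hfx] at hn
          nlinarith
        obtain ⟨A, ⟨-, hAc⟩, hA⟩ := hf n
        set U := {y | (1:ℝ) / (n + 1) < |f y|} with hU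
        have hUopen : IsOpen U :=
          isOpen_lt continuous_const (continuous_abs.comp f.continuous)
        have hUfin : U.Finite := by
          apply hAc.subset
          intro y hy hyA
          have h := hA hyA
          rw [Set.mem_setOf_eq] at h
          exact not_lt.mpr (le_of_lt hy) h
        have hxU : x ∈ U := h1
        have : ({x} : Set X) = U \ (U \ {x}) :=
          (Set.diff_diff_cancel_left (Set.singleton_subset_iff.mpr hxU)).symm
        show IsOpen ({x} : Set X)
        rw [this]
        exact hUopen.sdiff (hUfin.diff (t := {x})).isClosed
      exact hiso.subset hsub
    · intro hf n
      obtain ⟨x0⟩ : Nonempty X := inferInstance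
      refine ⟨{y | |f y| < 1 / (n + 1)} \ {x0}, ⟨?_, ?_⟩, Set.diff_subset⟩
      · intro h
        have : x0 ∈ {y | |f y| < 1 / (n + 1)} \ {x0} := h ▸ Set.mem_univ _
        exact this.2 rfl
      · apply Set.Finite.subset (hf.union (Set.finite_singleton x0))
        intro y hy
        rw [Set.mem_compl_iff, Set.mem_diff] at hy
        push_neg at hy
        by_cases hy0 : y = x0
        · exact Or.inr hy0
        · left
          have hnlt : ¬ (|f y| < 1 / (n + 1)) := fun h => hy0 (hy h)
          intro hfy
          apply hnlt
          rw [Set.mem_setOf_eq] at hfy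
          rw [hfy, abs_zero]
          positivity
end

section
/- C^P(X) is a free ideal of C(X) (i.e. ⋂_{f ∈ C^P(X)} Z(f) = ∅) if and only if the filter F generated by P has no cluster point, i.e. ⋂_{A∈P} cl(A) = ∅. -/
/-- `C^P(X)` is a free ideal iff the filter generated by `P` has no cluster
point, i.e. `⋂_{A∈P} cl A = ∅`. -/
theorem cP_free_iff {X : Type*} [TopologicalSpace X] [T2Space X]
    [CompletelyRegularSpace X]
    (P : Set (Set X)) (hne : P.Nonempty)
    (hopen : ∀ A ∈ P, IsOpen A) (hAne : ∀ A ∈ P, A.Nonempty)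
    (hbase : ∀ A ∈ P, ∀ B ∈ P, ∃ C ∈ P, C ⊆ A ∩ B) :
    (⋂ f ∈ {f : ContinuousMap X ℝ | ∃ A ∈ P, A ⊆ {x | f x = 0}}, {x | f x = 0}) = ∅ ↔
      (⋂ A ∈ P, closure A) = ∅ := by
  have key : (⋂ f ∈ {f : ContinuousMap X ℝ | ∃ A ∈ P, A ⊆ {x | f x = 0}}, {x | f x = 0})
      = ⋂ A ∈ P, closure A := by
    ext x
    simp only [Set.mem_iInter, Set.mem_setOf_eq]
    constructor
    · intro h A hA
      by_contra hx
      obtain ⟨f, hf, hf0, hf1⟩ :=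
        CompletelyRegularSpace.completely_regular x (closure A) isClosed_closure hx
      set g : ContinuousMap X ℝ := ⟨fun y => (f y : ℝ) - 1,
        (continuous_subtype_val.comp hf).sub continuous_const⟩ with hg
      have hgz : A ⊆ {y | g y = 0} := by
        intro a ha
        have := hf1 (subset_closure ha)
        simp only [Set.mem_setOf_eq, hg, ContinuousMap.coe_mk, this]
        norm_num
      have := h g ⟨A, hA, hgz⟩
      simp only [hg, ContinuousMap.coe_mk, hf0] at this
      norm_num at this
    · intro h f ⟨A, hA, hAf⟩
      have hc : closure A ⊆ {y | f y = 0} :=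
        closure_minimal hAf (isClosed_eq f.continuous continuous_const)
      exact hc (h A hA)
  rw [key]
end

section
/- The following are equivalent for an open filter base P on X: (1) every element of P is dense in X; (2) C_{∞P}(X) = {0}; (3) C^P(X) = {0}. -/
-- auxiliary: (1) → C_{∞P} = {0}
private lemma aux_one_two {X : Type*} [TopologicalSpace X] [T2Space X]
    (P : Set (Set X)) (hne : P.Nonempty)
    (hdense : ∀ A ∈ P, Dense A) :
    {f : ContinuousMap X ℝ | ∀ n : ℕ, ∃ A ∈ P, A ⊆ {x | |f x| < 1 / (n + 1)}} = {0} := by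
  apply Set.eq_singleton_iff_unique_mem.mpr
  constructor
  · intro n
    obtain ⟨A, hA⟩ := hne
    exact ⟨A, hA, fun x _ => by simp; positivity⟩
  · intro f hf
    ext x
    simp only [ContinuousMap.zero_apply]
    have key : ∀ n : ℕ, |f x| ≤ 1 / (n + 1) := by
      intro n
      obtain ⟨A, hA, hsub⟩ := hf n
      have hclosed : IsClosed {y | |f y| ≤ 1 / (n + 1)} := by
        have : Continuous fun y => |f y| := f.continuous.abs
        exact isClosed_le this continuous_const
      have : closure A ⊆ {y | |f y| ≤ 1 / (n + 1)} :=
        closure_minimal (fun y hy => le_of_lt (Set.mem_setOf_eq ▸ hsub hy)) hclosed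
      exact this ((hdense A hA).closure_eq ▸ Set.mem_univ x)
    have : |f x| ≤ 0 := by
      by_contra h
      push_neg at h
      obtain ⟨n, hn⟩ := exists_nat_one_div_lt h
      exact absurd (key n) (not_le.mpr hn)
    simpa using le_antisymm this (abs_nonneg _)

-- auxiliary: C^P = {0} → (1), by complete regularity
private lemma aux_three_one {X : Type*} [TopologicalSpace X] [T2Space X]
    [CompletelyRegularSpace X]
    (P : Set (Set X))
    (h : {f : ContinuousMap X ℝ | ∃ A ∈ P, A ⊆ {x | f x = 0}} = {0}) :
    ∀ A ∈ P, Dense A := by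
  intro A hA
  by_contra hd
  rw [dense_iff_closure_eq] at hd
  obtain ⟨x, hx⟩ : ∃ x, x ∉ closure A := by
    by_contra hc
    push_neg at hc
    exact hd (Set.eq_univ_of_forall hc)
  obtain ⟨f, hfc, hfx, hfK⟩ :=
    CompletelyRegularSpace.completely_regular x (closure A) isClosed_closure hx
  set g : ContinuousMap X ℝ := ⟨fun y => 1 - (f y : ℝ), by fun_prop⟩ with hg
  have hgmem : g ∈ {f : ContinuousMap X ℝ | ∃ A ∈ P, A ⊆ {x | f x = 0}} := by
    refine ⟨A, hA, fun y hy => ?_⟩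
    have : f y = 1 := hfK (subset_closure hy)
    simp [hg, this]
  rw [h] at hgmem
  have : g x = 0 := by rw [hgmem]; rfl
  simp [hg, hfx] at this

/-- every member of `P` is dense iff `C_{∞P}(X) = 0` iff `C^P(X) = 0`. -/
theorem dense_iff_zero {X : Type*} [TopologicalSpace X] [T2Space X]
    [CompletelyRegularSpace X]
    (P : Set (Set X)) (hne : P.Nonempty)
    (hopen : ∀ A ∈ P, IsOpen A) (hAne : ∀ A ∈ P, A.Nonempty)
    (hbase : ∀ A ∈ P, ∀ B ∈ P, ∃ C ∈ P, C ⊆ A ∩ B) :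
    ((∀ A ∈ P, Dense A) ↔
      {f : ContinuousMap X ℝ | ∀ n : ℕ, ∃ A ∈ P, A ⊆ {x | |f x| < 1 / (n + 1)}} = {0}) ∧
    (({f : ContinuousMap X ℝ | ∀ n : ℕ, ∃ A ∈ P, A ⊆ {x | |f x| < 1 / (n + 1)}} = {0}) ↔
      {f : ContinuousMap X ℝ | ∃ A ∈ P, A ⊆ {x | f x = 0}} = {0}) := by
  have h23 : ∀ (h2 : {f : ContinuousMap X ℝ | ∀ n : ℕ, ∃ A ∈ P, A ⊆ {x | |f x| < 1 / (n + 1)}} = {0}),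
      {f : ContinuousMap X ℝ | ∃ A ∈ P, A ⊆ {x | f x = 0}} = {0} := by
    intro h2
    apply Set.eq_singleton_iff_unique_mem.mpr
    constructor
    · obtain ⟨A, hA⟩ := hne
      exact ⟨A, hA, fun x _ => rfl⟩
    · intro f hf
      obtain ⟨A, hA, hsub⟩ := hf
      have : f ∈ {f : ContinuousMap X ℝ | ∀ n : ℕ, ∃ A ∈ P, A ⊆ {x | |f x| < 1 / (n + 1)}} := by
        intro n
        refine ⟨A, hA, fun x hx => ?_⟩
        have : f x = 0 := hsub hx
        simp [this]; positivity
      rwa [h2] at this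
  refine ⟨⟨fun h1 => aux_one_two P hne h1, fun h2 => aux_three_one P (h23 h2)⟩,
    ⟨h23, fun h3 => aux_one_two P hne (aux_three_one P h3)⟩⟩
end

section
/- A closed subset A of X is an F-CG_δ set if and only if A = Z(f) for some f ∈ C_{∞P}(X). -/
/-- `A` is an `F`-`CG_δ` set for the filter generated by the open filter base `P`. -/
def IsFCGdelta {X : Type*} [TopologicalSpace X] (P : Set (Set X)) (A : Set X) : Prop :=
  ∃ B : ℕ → Set X, A = ⋂ i, B i ∧ (∀ i, IsOpen (B i)) ∧
    (∀ i, ∃ Q ∈ P, Q ⊆ B i) ∧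
    ∀ i, ∃ g : ContinuousMap X ℝ,
      (∀ x ∈ closure (B (i + 1)), g x = 0) ∧ ∀ x ∉ B i, g x = 1

set_option maxHeartbeats 1000000 in
/-- a closed set is `F`-`CG_δ` iff it is `Z(f)` for some `f ∈ C_{∞P}(X)`. -/
theorem closed_FCGdelta_iff {X : Type*} [TopologicalSpace X] [T2Space X]
    [CompletelyRegularSpace X]
    (P : Set (Set X)) (hne : P.Nonempty)
    (hopen : ∀ A ∈ P, IsOpen A) (hAne : ∀ A ∈ P, A.Nonempty)
    (hbase : ∀ A ∈ P, ∀ B ∈ P, ∃ C ∈ P, C ⊆ A ∩ B)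
    (A : Set X) (hA : IsClosed A) :
    IsFCGdelta P A ↔
      ∃ f ∈ {f : ContinuousMap X ℝ | ∀ n : ℕ, ∃ Q ∈ P, Q ⊆ {x | |f x| < 1 / (n + 1)}},
        A = {x | f x = 0} := by
  constructor
  · rintro ⟨B, hAB, hBopen, hBP, hg⟩
    choose g hg0 hg1 using hg
    have hmono : ∀ i, B (i + 1) ⊆ B i := by
      intro i x hx
      by_contra hxB
      have h0 := hg0 i x (subset_closure hx)
      have h1 := hg1 i x hxB
      rw [h0] at h1; norm_num at h1
    have hanti : Antitone B := antitone_nat_of_succ_le hmono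
    set G : ℕ → X → ℝ := fun i x => min |g i x| ((1 / 2 : ℝ) ^ (i + 1)) with hG
    have hGcont : ∀ i, Continuous (G i) := fun i => ((g i).continuous.abs).min continuous_const
    have hGnonneg : ∀ i x, 0 ≤ G i x := fun i x => le_min (abs_nonneg _) (by positivity)
    have hGle : ∀ i x, G i x ≤ (1 / 2 : ℝ) ^ (i + 1) := fun i x => min_le_right _ _
    have hu : Summable (fun i : ℕ => (1 / 2 : ℝ) ^ (i + 1)) := by
      have := (summable_geometric_of_lt_one (by norm_num : (0:ℝ) ≤ 1/2)
        (by norm_num)).mul_left (1/2 : ℝ)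
      simpa [pow_succ, mul_comm] using this
    have hGsum : ∀ x, Summable (fun i => G i x) :=
      fun x => Summable.of_nonneg_of_le (fun i => hGnonneg i x) (fun i => hGle i x) hu
    have hfc : Continuous (fun x => ∑' i, G i x) :=
      continuous_tsum hGcont hu (fun n x => by
        rw [Real.norm_eq_abs, abs_of_nonneg (hGnonneg n x)]; exact hGle n x)
    refine ⟨⟨fun x => ∑' i, G i x, hfc⟩, ?_, ?_⟩
    · intro n
      obtain ⟨Q, hQP, hQB⟩ := hBP (n + 1)
      refine ⟨Q, hQP, fun x hx => ?_⟩
      have hxB : x ∈ B (n + 1) := hQB hx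
      have hGz : ∀ j < n + 1, G j x = 0 := by
        intro j hj
        have hxBj : x ∈ B (j + 1) := hanti hj hxB
        have hgz := hg0 j x (subset_closure hxBj)
        simp only [hG]
        rw [hgz, abs_zero]
        exact min_eq_left (by positivity)
      have key : (∑' i, G i x) ≤ (1 / 2 : ℝ) ^ (n + 1) := by
        have h1 : ∑ i ∈ Finset.range (n + 1), G i x + ∑' i, G (i + (n + 1)) x
            = ∑' i, G i x := Summable.sum_add_tsum_nat_add (n + 1) (hGsum x)
        have h2 : ∑ i ∈ Finset.range (n + 1), G i x = 0 :=
          Finset.sum_eq_zero (fun i hi => hGz i (Finset.mem_range.mp hi))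
        have h3 : ∑' i, G (i + (n + 1)) x ≤ ∑' i : ℕ, (1 / 2 : ℝ) ^ (n + 2) * (1 / 2) ^ i := by
          apply Summable.tsum_le_tsum
          · intro i
            calc G (i + (n + 1)) x ≤ (1 / 2 : ℝ) ^ (i + (n + 1) + 1) := hGle _ x
              _ = (1 / 2 : ℝ) ^ (n + 2) * (1 / 2) ^ i := by ring
          · exact (summable_nat_add_iff (n + 1)).2 (hGsum x)
          · exact (summable_geometric_of_lt_one (by norm_num) (by norm_num)).mul_left _
        have h4 : ∑' i : ℕ, (1 / 2 : ℝ) ^ (n + 2) * (1 / 2 : ℝ) ^ i = (1 / 2 : ℝ) ^ (n + 1) := by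
          rw [tsum_mul_left, tsum_geometric_of_lt_one (by norm_num) (by norm_num)]
          rw [pow_succ]
          ring
        calc (∑' i, G i x) = ∑' i, G (i + (n + 1)) x := by rw [← h1, h2, zero_add]
          _ ≤ _ := h3
          _ = _ := h4
      have hn2 : ((n : ℝ) + 2) ≤ 2 ^ (n + 1) := by
        have := Nat.lt_two_pow_self (n := n + 1)
        have h : n + 2 ≤ 2 ^ (n + 1) := this
        exact_mod_cast h
      have h5 : (1 / 2 : ℝ) ^ (n + 1) ≤ 1 / ((n : ℝ) + 2) := by
        rw [div_pow, one_pow, div_le_div_iff₀ (by positivity) (by positivity)]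
        nlinarith
      have h6 : (1 / ((n : ℝ) + 2)) < 1 / ((n : ℝ) + 1) := by
        apply one_div_lt_one_div_of_lt (by positivity)
        linarith
      show |∑' i, G i x| < 1 / ((n : ℝ) + 1)
      rw [abs_of_nonneg (tsum_nonneg (fun i => hGnonneg i x))]
      calc (∑' i, G i x) ≤ (1 / 2 : ℝ) ^ (n + 1) := key
        _ ≤ 1 / ((n : ℝ) + 2) := h5
        _ < 1 / ((n : ℝ) + 1) := h6
    · ext x
      simp only [Set.mem_setOf_eq, ContinuousMap.coe_mk]
      constructor
      · intro hxA
        have hz : ∀ i, G i x = 0 := by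
          intro i
          have hxB : x ∈ B (i + 1) := by
            rw [hAB] at hxA; exact Set.mem_iInter.mp hxA (i + 1)
          have hgz := hg0 i x (subset_closure hxB)
          simp only [hG]
          rw [hgz, abs_zero]
          exact min_eq_left (by positivity)
        simp [hz]
      · intro hfx
        rw [hAB]
        refine Set.mem_iInter.mpr (fun i => ?_)
        by_contra hxB
        have h1 := hg1 i x hxB
        have hle : G i x ≤ ∑' j, G j x := Summable.le_tsum (hGsum x) i (fun j _ => hGnonneg j x)
        rw [hfx] at hle
        have hz : G i x = 0 := le_antisymm hle (hGnonneg i x)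
        simp only [hG] at hz
        rw [h1, abs_one] at hz
        have : (0:ℝ) < min 1 ((1 / 2 : ℝ) ^ (i + 1)) := lt_min one_pos (by positivity)
        linarith
  · rintro ⟨f, hf, hAf⟩
    refine ⟨fun i => {x | |f x| < 1 / ((i : ℝ) + 1)}, ?_, ?_, ?_, ?_⟩
    · rw [hAf]; ext x
      simp only [Set.mem_setOf_eq, Set.mem_iInter]
      constructor
      · intro h i
        rw [h, abs_zero]
        positivity
      · intro h
        by_contra hne
        obtain ⟨n, hn⟩ := exists_nat_one_div_lt (abs_pos.mpr hne)
        exact absurd (h n) (not_lt.mpr hn.le)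
    · intro i
      exact isOpen_lt (continuous_abs.comp f.continuous) continuous_const
    · intro i
      exact hf i
    · intro i
      set c : ℝ := 1 / ((i : ℝ) + 2) with hc
      set d : ℝ := 1 / ((i : ℝ) + 1) with hd
      have hc0 : 0 < c := by positivity
      have hcd : c < d := by
        apply one_div_lt_one_div_of_lt (by positivity)
        linarith
      have hdc : 0 < d - c := by linarith
      have hcont : Continuous fun x => max 0 (min 1 ((|f x| - c) / (d - c))) := by
        apply continuous_const.max
        apply continuous_const.min
        exact ((continuous_abs.comp f.continuous).sub continuous_const).div_const _
      refine ⟨⟨fun x => max 0 (min 1 ((|f x| - c) / (d - c))), hcont⟩, ?_, ?_⟩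
      · intro x hx
        have hsub : closure {x : X | |f x| < 1 / ((↑(i + 1) : ℝ) + 1)} ⊆ {x : X | |f x| ≤ c} := by
          apply closure_minimal
          · intro y hy
            have : |f y| < 1 / ((↑(i + 1) : ℝ) + 1) := hy
            have hcast : (1 : ℝ) / ((↑(i + 1) : ℝ) + 1) = c := by
              rw [hc]; push_cast; ring_nf
            rw [hcast] at this
            exact this.le
          · exact isClosed_le (continuous_abs.comp f.continuous) continuous_const
        have hfx : |f x| ≤ c := hsub hx
        have hq : (|f x| - c) / (d - c) ≤ 0 :=
          div_nonpos_of_nonpos_of_nonneg (by linarith) hdc.le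
        simp only [ContinuousMap.coe_mk]
        exact max_eq_left (le_trans (min_le_right _ _) hq)
      · intro x hx
        have hfx : d ≤ |f x| := not_lt.mp hx
        have hq : 1 ≤ (|f x| - c) / (d - c) := by
          rw [le_div_iff₀ hdc]
          linarith
        simp only [ContinuousMap.coe_mk]
        rw [min_eq_left hq, max_eq_right zero_le_one]
end

section
/- C_{∞P}(X) = C^P(X) if and only if every closed F-CG_δ subset of X belongs to the filter F. -/
/-- Finite intersections of base sets contain a base set. -/
lemma exists_base_subset_finite {X : Type*} (P : Set (Set X)) (hne : P.Nonempty)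
    (hbase : ∀ A ∈ P, ∀ B ∈ P, ∃ C ∈ P, C ⊆ A ∩ B)
    (S : ℕ → Set X) (hS : ∀ i, ∃ Q ∈ P, Q ⊆ S i) :
    ∀ N : ℕ, ∃ Q ∈ P, ∀ i < N, Q ⊆ S i := by
  intro N
  induction N with
  | zero => exact ⟨hne.choose, hne.choose_spec, fun i hi => absurd hi (Nat.not_lt_zero i)⟩
  | succ n ih =>
    obtain ⟨Q, hQ, hQs⟩ := ih
    obtain ⟨Q', hQ', hQ's⟩ := hS n
    obtain ⟨C, hC, hCs⟩ := hbase Q hQ Q' hQ'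
    refine ⟨C, hC, fun i hi => ?_⟩
    rcases Nat.lt_succ_iff_lt_or_eq.mp hi with h | h
    · exact (hCs.trans Set.inter_subset_left).trans (hQs i h)
    · subst h; exact (hCs.trans Set.inter_subset_right).trans hQ's

/-- `C_{∞P}(X) = C^P(X)` iff every closed `F`-`CG_δ` set belongs to `F`. -/
theorem cInfP_eq_cP_iff {X : Type*} [TopologicalSpace X] [T2Space X]
    [CompletelyRegularSpace X]
    (P : Set (Set X)) (hne : P.Nonempty)
    (hopen : ∀ A ∈ P, IsOpen A) (hAne : ∀ A ∈ P, A.Nonempty)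
    (hbase : ∀ A ∈ P, ∀ B ∈ P, ∃ C ∈ P, C ⊆ A ∩ B) :
    ({f : ContinuousMap X ℝ | ∀ n : ℕ, ∃ Q ∈ P, Q ⊆ {x | |f x| < 1 / (n + 1)}} =
      {f : ContinuousMap X ℝ | ∃ Q ∈ P, Q ⊆ {x | f x = 0}}) ↔
    (∀ A : Set X, IsClosed A → IsFCGdelta P A → ∃ Q ∈ P, Q ⊆ A) := by
  constructor
  · -- forward direction
    intro h A hA ⟨B, hAB, hBopen, hBQ, hBg⟩
    choose g hg0 hg1 using hBg
    set t : ℕ → X → ℝ := fun i x => (1 / 2 : ℝ) ^ i * min |g i x| 1 with ht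
    have htnonneg : ∀ i x, 0 ≤ t i x := fun i x => by
      apply mul_nonneg (by positivity)
      exact le_min (abs_nonneg _) zero_le_one
    have htbound : ∀ i x, ‖t i x‖ ≤ (1 / 2 : ℝ) ^ i := by
      intro i x
      rw [Real.norm_eq_abs, abs_of_nonneg (htnonneg i x)]
      calc (1 / 2 : ℝ) ^ i * min |g i x| 1 ≤ (1 / 2 : ℝ) ^ i * 1 := by
            apply mul_le_mul_of_nonneg_left (min_le_right _ _) (by positivity)
        _ = (1 / 2 : ℝ) ^ i := mul_one _
    have hgeom : Summable fun i : ℕ => (1 / 2 : ℝ) ^ i :=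
      summable_geometric_of_lt_one (by norm_num) (by norm_num)
    have hcont : ∀ i, Continuous (t i) := fun i =>
      continuous_const.mul ((map_continuous (g i)).abs.min continuous_const)
    have hsx : ∀ x, Summable fun i => t i x := fun x =>
      hgeom.of_norm_bounded (fun i => htbound i x)
    set f : ContinuousMap X ℝ := ⟨fun x => ∑' i, t i x, continuous_tsum hcont hgeom htbound⟩
      with hf
    have hfnonneg : ∀ x, 0 ≤ f x := fun x => tsum_nonneg (fun i => htnonneg i x)
    have hfmem : f ∈ {f : ContinuousMap X ℝ |
        ∀ n : ℕ, ∃ Q ∈ P, Q ⊆ {x | |f x| < 1 / (n + 1)}} := by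
      intro n
      have hpos : (0 : ℝ) < 1 / (2 * ((n : ℝ) + 1)) := by positivity
      obtain ⟨N, hN⟩ := exists_pow_lt_of_lt_one hpos (by norm_num : (1 / 2 : ℝ) < 1)
      obtain ⟨Q, hQ, hQs⟩ := exists_base_subset_finite P hne hbase
        (fun i => B (i + 1)) (fun i => hBQ (i + 1)) N
      refine ⟨Q, hQ, fun x hx => ?_⟩
      have hzero : ∀ i < N, t i x = 0 := by
        intro i hi
        have hxB : x ∈ closure (B (i + 1)) := subset_closure (hQs i hi hx)
        simp [ht, hg0 i x hxB]
      have key : f x ≤ (1 / 2 : ℝ) ^ N * 2 := by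
        have h1 : f x = ∑' i, t (i + N) x := by
          have := (hsx x).sum_add_tsum_nat_add (f := fun i => t i x) N
          have hzs : ∑ i ∈ Finset.range N, t i x = 0 :=
            Finset.sum_eq_zero fun i hi => hzero i (Finset.mem_range.mp hi)
          rw [hf]
          simp only [ContinuousMap.coe_mk]
          rw [← this, hzs, zero_add]
        have h2 : ∑' i : ℕ, t (i + N) x ≤ ∑' i : ℕ, (1 / 2 : ℝ) ^ (i + N) := by
          apply Summable.tsum_le_tsum
          · intro i
            have := htbound (i + N) x
            rwa [Real.norm_eq_abs, abs_of_nonneg (htnonneg _ x)] at this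
          · exact (summable_nat_add_iff N).mpr (hsx x)
          · exact (summable_nat_add_iff N).mpr hgeom
        have h3 : ∑' i : ℕ, (1 / 2 : ℝ) ^ (i + N) = (1 / 2 : ℝ) ^ N * 2 := by
          have : ∀ i : ℕ, (1 / 2 : ℝ) ^ (i + N) = (1 / 2 : ℝ) ^ i * (1 / 2 : ℝ) ^ N :=
            fun i => pow_add _ _ _
          rw [tsum_congr this, tsum_mul_right, tsum_geometric_of_lt_one (by norm_num)
            (by norm_num)]
          ring
        rw [h1]; exact h2.trans h3.le
      have : f x < 1 / ((n : ℝ) + 1) := by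
        calc f x ≤ (1 / 2 : ℝ) ^ N * 2 := key
          _ < 1 / (2 * ((n : ℝ) + 1)) * 2 := by linarith
          _ = 1 / ((n : ℝ) + 1) := by field_simp
      simpa [abs_of_nonneg (hfnonneg x)] using this
    rw [h] at hfmem
    obtain ⟨Q, hQ, hQz⟩ := hfmem
    refine ⟨Q, hQ, fun x hx => ?_⟩
    have hfx : f x = 0 := hQz hx
    rw [hAB, Set.mem_iInter]
    intro i
    by_contra hxB
    have hg : g i x = 1 := hg1 i x hxB
    have hti : t i x ≤ f x := Summable.le_tsum (hsx x) i (fun j _ => htnonneg j x)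
    rw [hfx] at hti
    have : t i x = 0 := le_antisymm hti (htnonneg i x)
    simp [ht, hg] at this
  · -- backward direction
    intro h
    ext f
    simp only [Set.mem_setOf_eq]
    constructor
    · intro hf
      set A : Set X := {x | f x = 0} with hA
      have hAclosed : IsClosed A := isClosed_eq (map_continuous f) continuous_const
      apply h A hAclosed
      set B : ℕ → Set X := fun i => {x | |f x| < 1 / ((i : ℝ) + 1)} with hB
      refine ⟨B, ?_, ?_, ?_, ?_⟩
      · ext x
        simp only [hA, hB, Set.mem_setOf_eq, Set.mem_iInter]
        constructor
        · intro hx i; rw [hx]; simpa using by positivity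
        · intro hx
          by_contra hne0
          have hpos : 0 < |f x| := abs_pos.mpr hne0
          obtain ⟨n, hn⟩ := exists_nat_one_div_lt hpos
          exact absurd (hx n) (not_lt.mpr hn.le)
      · intro i
        exact isOpen_lt ((map_continuous f).abs) continuous_const
      · intro i; exact hf i
      · intro i
        refine ⟨⟨fun x => min 1 (max 0 (((i : ℝ) + 1) * ((i : ℝ) + 2) *
          (|f x| - 1 / ((i : ℝ) + 2)))), by fun_prop⟩, ?_, ?_⟩
        · intro x hx
          have hle : |f x| ≤ 1 / ((i : ℝ) + 2) := by
            have hsub : B (i + 1) ⊆ {y | |f y| ≤ 1 / ((i : ℝ) + 2)} := by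
              intro y hy
              simp only [hB, Set.mem_setOf_eq] at hy ⊢
              have : ((i : ℝ) + 1 + 1) = (i : ℝ) + 2 := by ring
              calc |f y| ≤ 1 / (((i : ℕ) + 1 : ℕ) + 1 : ℝ) := le_of_lt hy
                _ = 1 / ((i : ℝ) + 2) := by push_cast; ring_nf
            have hcl : closure (B (i + 1)) ⊆ {y | |f y| ≤ 1 / ((i : ℝ) + 2)} :=
              closure_minimal hsub (isClosed_le (map_continuous f).abs continuous_const)
            exact hcl hx
          simp only [ContinuousMap.coe_mk]
          have ht0 : ((i : ℝ) + 1) * ((i : ℝ) + 2) * (|f x| - 1 / ((i : ℝ) + 2)) ≤ 0 := by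
            apply mul_nonpos_of_nonneg_of_nonpos (by positivity)
            linarith
          rw [max_eq_left ht0, min_eq_right zero_le_one]
        · intro x hx
          simp only [hB, Set.mem_setOf_eq, not_lt] at hx
          simp only [ContinuousMap.coe_mk]
          have hi2 : (0:ℝ) < (i : ℝ) + 2 := by positivity
          have hi1 : (0:ℝ) < (i : ℝ) + 1 := by positivity
          have ht1 : 1 ≤ ((i : ℝ) + 1) * ((i : ℝ) + 2) * (|f x| - 1 / ((i : ℝ) + 2)) := by
            have h1 : 1 / ((i : ℝ) + 1) ≤ |f x| := hx
            have key : 1 / ((i : ℝ) + 1) - 1 / ((i : ℝ) + 2) =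
                1 / (((i : ℝ) + 1) * ((i : ℝ) + 2)) := by
              field_simp; ring
            have : 1 / (((i : ℝ) + 1) * ((i : ℝ) + 2)) ≤ |f x| - 1 / ((i : ℝ) + 2) := by
              rw [← key]; linarith
            calc (1:ℝ) = ((i : ℝ) + 1) * ((i : ℝ) + 2) *
                  (1 / (((i : ℝ) + 1) * ((i : ℝ) + 2))) := by field_simp
              _ ≤ ((i : ℝ) + 1) * ((i : ℝ) + 2) * (|f x| - 1 / ((i : ℝ) + 2)) := by
                  apply mul_le_mul_of_nonneg_left this (by positivity)
          rw [min_eq_left (le_max_of_le_right ht1)]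
    · rintro ⟨Q, hQ, hQz⟩ n
      refine ⟨Q, hQ, fun x hx => ?_⟩
      have : f x = 0 := hQz hx
      simp only [Set.mem_setOf_eq, this, abs_zero]
      positivity
end

section
/- For P = {ℝ ∖ [1/n, n] : n ∈ ℕ}, P is an open filter base on ℝ and C_{∞P}(ℝ) is not an ideal of C(ℝ): there exist f ∈ C_{∞P}(ℝ) and g ∈ C(ℝ) with fg ∉ C_{∞P}(ℝ). -/
/-- for `P = {ℝ∖[1/n, n] : n ≥ 1}`, `P` is an open filter base on `ℝ` and
`C_{∞P}(ℝ)` is not closed under multiplication by elements of `C(ℝ)`. -/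
theorem cInfP_not_ideal_real :
    (∀ S ∈ {S : Set ℝ | ∃ n : ℕ, 1 ≤ n ∧ S = (Set.Icc ((1 : ℝ) / n) (n : ℝ))ᶜ},
        IsOpen S ∧ S.Nonempty) ∧
    (∀ S ∈ {S : Set ℝ | ∃ n : ℕ, 1 ≤ n ∧ S = (Set.Icc ((1 : ℝ) / n) (n : ℝ))ᶜ},
      ∀ T ∈ {S : Set ℝ | ∃ n : ℕ, 1 ≤ n ∧ S = (Set.Icc ((1 : ℝ) / n) (n : ℝ))ᶜ},
        ∃ U ∈ {S : Set ℝ | ∃ n : ℕ, 1 ≤ n ∧ S = (Set.Icc ((1 : ℝ) / n) (n : ℝ))ᶜ},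
          U ⊆ S ∩ T) ∧
    ∃ f g : ContinuousMap ℝ ℝ,
      (∀ n : ℕ, ∃ A ∈ {S : Set ℝ | ∃ n : ℕ, 1 ≤ n ∧ S = (Set.Icc ((1 : ℝ) / n) (n : ℝ))ᶜ},
        A ⊆ {x | |f x| < 1 / (n + 1)}) ∧
      ¬ (∀ n : ℕ, ∃ A ∈ {S : Set ℝ | ∃ n : ℕ, 1 ≤ n ∧ S = (Set.Icc ((1 : ℝ) / n) (n : ℝ))ᶜ},
        A ⊆ {x | |(f * g) x| < 1 / (n + 1)}) := by
  refine ⟨?_, ?_, ?_⟩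
  · rintro S ⟨n, hn, rfl⟩
    refine ⟨isClosed_Icc.isOpen_compl, ⟨-1, fun h => ?_⟩⟩
    have h1 := h.1
    have h2 : (0:ℝ) ≤ 1 / n := by positivity
    linarith
  · rintro S ⟨n, hn, rfl⟩ T ⟨m, hm, rfl⟩
    refine ⟨_, ⟨max n m, le_trans hn (le_max_left n m), rfl⟩, Set.subset_inter ?_ ?_⟩
    · refine Set.compl_subset_compl.mpr (Set.Icc_subset_Icc ?_ ?_)
      · apply one_div_le_one_div_of_le
        · exact_mod_cast Nat.pos_of_ne_zero (by omega)
        · exact_mod_cast le_max_left n m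
      · exact_mod_cast le_max_left n m
    · refine Set.compl_subset_compl.mpr (Set.Icc_subset_Icc ?_ ?_)
      · apply one_div_le_one_div_of_le
        · exact_mod_cast Nat.pos_of_ne_zero (by omega)
        · exact_mod_cast le_max_right n m
      · exact_mod_cast le_max_right n m
  · refine ⟨⟨fun x => max x 0 / (1 + x ^ 2), ?_⟩, ⟨fun x => 1 + x ^ 2, by continuity⟩, ?_, ?_⟩
    · exact (continuous_id.max continuous_const).div (by continuity) (fun x => by positivity)
    · intro n
      refine ⟨(Set.Icc ((1:ℝ)/(n+1)) ((n+1:ℕ) : ℝ))ᶜ, ⟨n+1, by omega, by push_cast; ring_nf⟩, ?_⟩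
      intro x hx
      simp only [Set.mem_compl_iff, Set.mem_Icc, not_and_or, not_le, Nat.cast_add,
        Nat.cast_one] at hx
      have hden : (0:ℝ) < 1 + x ^ 2 := by positivity
      have habs : |max x 0 / (1 + x ^ 2)| = max x 0 / (1 + x ^ 2) := by
        rw [abs_of_nonneg]
        positivity
      simp only [Set.mem_setOf_eq, ContinuousMap.coe_mk]
      rw [habs, div_lt_div_iff₀ hden (by positivity)]
      rcases hx with hx | hx
      · rcases le_or_gt x 0 with h0 | h0
        · rw [max_eq_right h0]; nlinarith [sq_nonneg x]
        · rw [max_eq_left h0.le]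
          have hx' : x * ((n:ℝ) + 1) < 1 := (lt_div_iff₀ (by positivity)).mp hx
          nlinarith [sq_nonneg x]
      · have h0 : (0:ℝ) < x := by
          have : (0:ℝ) ≤ (n:ℝ) := Nat.cast_nonneg n
          linarith
        rw [max_eq_left h0.le]
        nlinarith
    · intro h
      obtain ⟨A, ⟨m, hm, rfl⟩, hA⟩ := h 0
      have hmem : ((m:ℝ) + 1) ∈ (Set.Icc ((1:ℝ)/m) (m:ℝ))ᶜ := by
        simp only [Set.mem_compl_iff, Set.mem_Icc, not_and_or, not_le]
        right; linarith
      have := hA hmem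
      simp only [Set.mem_setOf_eq, ContinuousMap.mul_apply, ContinuousMap.coe_mk] at this
      have hm1 : (1:ℝ) ≤ (m:ℝ) + 1 := by
        have : (0:ℝ) ≤ (m:ℝ) := Nat.cast_nonneg m
        linarith
      have hne : (1:ℝ) + ((m:ℝ)+1) ^ 2 ≠ 0 := by positivity
      rw [div_mul_cancel₀ _ hne] at this
      rw [max_eq_left (by linarith : (0:ℝ) ≤ (m:ℝ)+1), abs_of_nonneg (by linarith)] at this
      norm_num at this
      linarith
end

section
/- The following are equivalent: (1) C_{∞P}(X) is an ideal of C(X) and for every F ∈ F the set X∖cl(F) is bounded; (2) the set of non-cluster points of F (i.e. X ∖ ⋂_{F∈F} cl(F)) is bounded; (3) the complement of every closed F-CG_δ subset of X is bounded. -/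
/-- `A ⊆ X` is bounded (relatively pseudocompact): every `f ∈ C(X)` is bounded on `A`. -/
def IsRelBounded {X : Type*} [TopologicalSpace X] (A : Set X) : Prop :=
  ∀ f : ContinuousMap X ℝ, ∃ M : ℝ, ∀ x ∈ A, |f x| ≤ M

section AuxForCInfP

open Set


variable {X : Type*} [TopologicalSpace X] [T2Space X] [CompletelyRegularSpace X]

private noncomputable def chainP {X : Type*} {P : Set (Set X)}
    (hbase : ∀ A ∈ P, ∀ B ∈ P, ∃ C ∈ P, C ⊆ A ∩ B)
    (Q : ℕ → Set X) (hQ : ∀ n, Q n ∈ P) : ℕ → {S : Set X // S ∈ P}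
  | 0 => ⟨Q 0, hQ 0⟩
  | n+1 =>
    ⟨(hbase (chainP hbase Q hQ n).1 (chainP hbase Q hQ n).2 (Q (n+1)) (hQ (n+1))).choose,
     (hbase (chainP hbase Q hQ n).1 (chainP hbase Q hQ n).2 (Q (n+1)) (hQ (n+1))).choose_spec.1⟩

private lemma chainP_succ {X : Type*} {P : Set (Set X)}
    (hbase : ∀ A ∈ P, ∀ B ∈ P, ∃ C ∈ P, C ⊆ A ∩ B)
    (Q : ℕ → Set X) (hQ : ∀ n, Q n ∈ P) (n : ℕ) :
    (chainP hbase Q hQ (n+1)).1 ⊆ (chainP hbase Q hQ n).1 ∩ Q (n+1) :=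
  (hbase (chainP hbase Q hQ n).1 (chainP hbase Q hQ n).2 (Q (n+1)) (hQ (n+1))).choose_spec.2

private lemma chainP_anti {X : Type*} {P : Set (Set X)}
    (hbase : ∀ A ∈ P, ∀ B ∈ P, ∃ C ∈ P, C ⊆ A ∩ B)
    (Q : ℕ → Set X) (hQ : ∀ n, Q n ∈ P) {n m : ℕ} (h : n ≤ m) :
    (chainP hbase Q hQ m).1 ⊆ (chainP hbase Q hQ n).1 := by
  induction m with
  | zero => rw [Nat.le_zero.mp h]
  | succ m ih =>
    rcases Nat.lt_or_ge n (m+1) with h2 | h2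
    · exact (chainP_succ hbase Q hQ m).trans (Set.inter_subset_left) |>.trans
        (by exact ih (Nat.lt_succ_iff.mp h2))
    · rw [Nat.le_antisymm h h2]

private lemma chainP_subset {X : Type*} {P : Set (Set X)}
    (hbase : ∀ A ∈ P, ∀ B ∈ P, ∃ C ∈ P, C ⊆ A ∩ B)
    (Q : ℕ → Set X) (hQ : ∀ n, Q n ∈ P) (n : ℕ) :
    (chainP hbase Q hQ n).1 ⊆ Q n := by
  cases n with
  | zero => exact subset_rfl
  | succ n => exact (chainP_succ hbase Q hQ n).trans Set.inter_subset_right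

lemma myTail (m : ℕ) :
    ∑' n : ℕ, (if n < m then 0 else (2⁻¹:ℝ)^n) = 2 * (2⁻¹:ℝ)^m := by
  have hgeo : Summable (fun n : ℕ => (2⁻¹:ℝ)^n) :=
    summable_geometric_of_lt_one (by norm_num) (by norm_num)
  induction m with
  | zero =>
    simp only [Nat.not_lt_zero, if_false]
    rw [tsum_geometric_of_lt_one (by norm_num) (by norm_num)]
    norm_num
  | succ m ih =>
    have hs : Summable (fun n : ℕ => (if n < m then 0 else (2⁻¹:ℝ)^n)) := by
      apply Summable.of_nonneg_of_le (fun n => ?_) (fun n => ?_) hgeo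
      · split <;> positivity
      · split
        · positivity
        · exact le_refl _
    have key : (fun n : ℕ => (if n < m+1 then 0 else (2⁻¹:ℝ)^n))
        = fun n : ℕ => if n = m then 0 else (if n < m then 0 else (2⁻¹:ℝ)^n) := by
      funext n
      rcases eq_or_ne n m with rfl | h
      · simp
      · rcases lt_or_ge n m with h2 | h2
        · simp [h, h2, Nat.lt_succ_of_lt h2]
        · have h4 : ¬ n < m + 1 := by omega
          have h5 : ¬ n < m := by omega
          simp [h, h4, h5]
    have h2 := Summable.tsum_eq_add_tsum_ite hs m
    have h3 : (if m < m then (0:ℝ) else (2⁻¹:ℝ)^m) = (2⁻¹:ℝ)^m := by simp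
    rw [ih, h3] at h2
    have hp : (2⁻¹:ℝ)^(m+1) = (2⁻¹:ℝ)^m * 2⁻¹ := pow_succ _ _
    rw [key]
    linarith

lemma exists_psi {P : Set (Set X)}
    (hbase : ∀ A ∈ P, ∀ B ∈ P, ∃ C ∈ P, C ⊆ A ∩ B)
    (Q : ℕ → Set X) (hQ : ∀ n, Q n ∈ P) (x : ℕ → X) (hx : ∀ n, x n ∉ closure (Q n)) :
    ∃ ψ : ContinuousMap X ℝ, (∀ y, 0 ≤ ψ y) ∧ (∀ n, (2⁻¹:ℝ)^n ≤ ψ (x n)) ∧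
      ∀ m, ∃ R ∈ P, ∀ y ∈ R, ψ y ≤ (2⁻¹:ℝ)^m := by
  set T : ℕ → Set X := fun n => (chainP hbase Q hQ n).1 with hT
  have hTP : ∀ n, T n ∈ P := fun n => (chainP hbase Q hQ n).2
  have hTQ : ∀ n, T n ⊆ Q n := fun n => chainP_subset hbase Q hQ n
  have hTanti : ∀ {n m : ℕ}, n ≤ m → T m ⊆ T n := fun h => chainP_anti hbase Q hQ h
  have hxT : ∀ n, x n ∉ closure (T n) := fun n h => hx n (closure_mono (hTQ n) h)
  have hsep : ∀ n, ∃ φ : X → ℝ, Continuous φ ∧ φ (x n) = 1 ∧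
      (∀ y ∈ closure (T n), φ y = 0) ∧ ∀ y, 0 ≤ φ y ∧ φ y ≤ 1 := by
    intro n
    obtain ⟨f, hf, hfx, hfK⟩ := CompletelyRegularSpace.completely_regular (x n)
      (closure (T n)) isClosed_closure (hxT n)
    refine ⟨fun y => 1 - (f y : ℝ), continuous_const.sub (continuous_subtype_val.comp hf),
      by simp [hfx], fun y hy => ?_, fun y =>
        ⟨by simp only; linarith [unitInterval.le_one (f y)],
         by simp only; linarith [unitInterval.nonneg (f y)]⟩⟩
    have : f y = 1 := hfK hy
    simp [this]
  choose φ hφc hφx hφ0 hφmem using hsep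
  have hgeo : Summable (fun n : ℕ => (2⁻¹:ℝ)^n) :=
    summable_geometric_of_lt_one (by norm_num) (by norm_num)
  set F : ℕ → X → ℝ := fun n y => (2⁻¹:ℝ)^n * φ n y with hF
  have hFle : ∀ (n : ℕ) (y : X), ‖F n y‖ ≤ (2⁻¹:ℝ)^n := by
    intro n y
    rw [Real.norm_eq_abs, hF, abs_mul, abs_of_nonneg (by positivity : (0:ℝ) ≤ (2⁻¹:ℝ)^n),
      abs_of_nonneg (hφmem n y).1]
    nlinarith [(hφmem n y).2, pow_pos (by norm_num : (0:ℝ) < 2⁻¹) n]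
  have hcont : Continuous (fun y => ∑' n, F n y) :=
    continuous_tsum (fun n => continuous_const.mul (hφc n)) hgeo hFle
  have hsumy : ∀ y, Summable (fun n => F n y) := fun y =>
    Summable.of_nonneg_of_le (fun n => mul_nonneg (by positivity) (hφmem n y).1)
      (fun n => by have := hFle n y; rwa [Real.norm_eq_abs, abs_of_nonneg
        (mul_nonneg (by positivity) (hφmem n y).1)] at this) hgeo
  refine ⟨⟨fun y => ∑' n, F n y, hcont⟩, fun y => ?_, fun n => ?_, fun m => ?_⟩
  · exact tsum_nonneg fun n => mul_nonneg (by positivity) (hφmem n y).1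
  · have h1 := Summable.le_tsum (hsumy (x n)) n
      (fun j _ => mul_nonneg (by positivity) (hφmem j (x n)).1)
    simp only [ContinuousMap.coe_mk]
    calc (2⁻¹:ℝ)^n = (2⁻¹:ℝ)^n * φ n (x n) := by rw [hφx n, mul_one]
      _ ≤ ∑' k, F k (x n) := h1
  · refine ⟨T (m+1), hTP (m+1), fun y hy => ?_⟩
    have hb : ∀ n, F n y ≤ (if n < m+1 then 0 else (2⁻¹:ℝ)^n) := by
      intro n
      by_cases h : n < m+1
      · have hyn : y ∈ closure (T n) := subset_closure (hTanti h.le hy)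
        simp [hF, h, hφ0 n y hyn]
      · simp only [h, if_false, hF]
        nlinarith [(hφmem n y).2, (hφmem n y).1, pow_pos (by norm_num : (0:ℝ) < 2⁻¹) n]
    have hsm : Summable (fun n : ℕ => (if n < m+1 then 0 else (2⁻¹:ℝ)^n)) := by
      apply Summable.of_nonneg_of_le (fun n => ?_) (fun n => ?_) hgeo
      · split <;> positivity
      · split
        · positivity
        · exact le_refl _
    simp only [ContinuousMap.coe_mk]
    calc (∑' n, F n y) ≤ ∑' n, (if n < m+1 then 0 else (2⁻¹:ℝ)^n) :=
          Summable.tsum_le_tsum hb (hsumy y) hsm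
      _ = 2 * (2⁻¹:ℝ)^(m+1) := myTail (m+1)
      _ = (2⁻¹:ℝ)^m := by ring


end AuxForCInfP

lemma relBounded_mono {X : Type*} [TopologicalSpace X] {A B : Set X} (h : A ⊆ B)
    (hB : IsRelBounded B) : IsRelBounded A :=
  fun f => (hB f).imp fun M hM x hx => hM x (h hx)

/-- equivalence of (1) `C_{∞P}(X)` is an ideal of `C(X)` and `X∖cl F` is
bounded for every `F ∈ F`; (2) the set of non-cluster points of `F` is bounded;
(3) the complement of every closed `F`-`CG_δ` is bounded. -/
theorem cInfP_ideal_tfae {X : Type*} [TopologicalSpace X] [T2Space X]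
    [CompletelyRegularSpace X]
    (P : Set (Set X)) (hne : P.Nonempty)
    (hopen : ∀ A ∈ P, IsOpen A) (hAne : ∀ A ∈ P, A.Nonempty)
    (hbase : ∀ A ∈ P, ∀ B ∈ P, ∃ C ∈ P, C ⊆ A ∩ B) :
    (((∃ I : Ideal (ContinuousMap X ℝ), (I : Set (ContinuousMap X ℝ)) =
        {f : ContinuousMap X ℝ | ∀ n : ℕ, ∃ Q ∈ P, Q ⊆ {x | |f x| < (1 : ℝ) / (n + 1)}}) ∧
      (∀ F : Set X, (∃ Q ∈ P, Q ⊆ F) → IsRelBounded (closure F)ᶜ)) ↔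
      IsRelBounded {x : X | ∃ F : Set X, (∃ Q ∈ P, Q ⊆ F) ∧ x ∉ closure F}) ∧
    (IsRelBounded {x : X | ∃ F : Set X, (∃ Q ∈ P, Q ⊆ F) ∧ x ∉ closure F} ↔
      ∀ A : Set X, IsClosed A → IsFCGdelta P A → IsRelBounded Aᶜ) := by
  classical
  set N : Set X := {x : X | ∃ F : Set X, (∃ Q ∈ P, Q ⊆ F) ∧ x ∉ closure F} with hNdef
  set S : Set (ContinuousMap X ℝ) :=
    {f : ContinuousMap X ℝ | ∀ n : ℕ, ∃ Q ∈ P, Q ⊆ {x | |f x| < (1 : ℝ) / (n + 1)}} with hSdef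
  -- a helper to extract a sequence witnessing unboundedness of g on N
  have hextract : ∀ g : ContinuousMap X ℝ, ¬ (∃ M, ∀ x ∈ N, |g x| ≤ M) →
      ∀ c : ℕ → ℝ, ∃ x : ℕ → X, (∀ n, ∃ Q ∈ P, x n ∉ closure Q) ∧ ∀ n, c n < |g (x n)| := by
    intro g hcon c
    push_neg at hcon
    choose x hxN hxg using fun n => hcon (c n)
    refine ⟨x, fun n => ?_, hxg⟩
    obtain ⟨F, ⟨Q, hQ, hQF⟩, hxF⟩ := hxN n
    exact ⟨Q, hQ, fun h => hxF (closure_mono hQF h)⟩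
  have h21 : IsRelBounded N →
      (∃ I : Ideal (ContinuousMap X ℝ), (I : Set (ContinuousMap X ℝ)) = S) ∧
      (∀ F : Set X, (∃ Q ∈ P, Q ⊆ F) → IsRelBounded (closure F)ᶜ) := by
    intro hN2
    constructor
    · refine ⟨{ carrier := S,
                zero_mem' := ?_, add_mem' := ?_, smul_mem' := ?_ }, rfl⟩
      · intro a b ha hb n
        obtain ⟨Q1, hQ1, hs1⟩ := ha (2*n+1)
        obtain ⟨Q2, hQ2, hs2⟩ := hb (2*n+1)
        obtain ⟨C, hC, hCsub⟩ := hbase Q1 hQ1 Q2 hQ2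
        refine ⟨C, hC, fun z hz => ?_⟩
        have h1 := hs1 (hCsub hz).1
        have h2 := hs2 (hCsub hz).2
        simp only [Set.mem_setOf_eq, ContinuousMap.add_apply] at *
        have hcast : ((2*n+1:ℕ):ℝ) + 1 = 2*((n:ℝ)+1) := by push_cast; ring
        rw [hcast] at h1 h2
        have hnn : ((n:ℝ)+1) ≠ 0 := by positivity
        calc |a z + b z| ≤ |a z| + |b z| := abs_add_le _ _
          _ < 1/(2*((n:ℝ)+1)) + 1/(2*((n:ℝ)+1)) := by linarith
          _ = 1/((n:ℝ)+1) := by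
              rw [← add_div, show (1:ℝ)+1 = 2 from by norm_num, ← div_div]
              norm_num
      · intro n
        obtain ⟨Q, hQ⟩ := hne
        refine ⟨Q, hQ, fun x _ => ?_⟩
        simp only [Set.mem_setOf_eq, ContinuousMap.zero_apply, abs_zero]
        positivity
      · intro c f hf
        obtain ⟨M, hM⟩ := hN2 c
        set M' : ℝ := |M| + 1 with hM'
        have hM'pos : (0:ℝ) < M' := by positivity
        have hfN : ∀ z, f z ≠ 0 → z ∈ N := by
          intro z hfz
          obtain ⟨n, hn⟩ := exists_nat_one_div_lt (abs_pos.mpr hfz)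
          obtain ⟨Q, hQ, hQs⟩ := hf n
          have hclosed : IsClosed {y | |f y| ≤ 1/((n:ℝ)+1)} :=
            isClosed_le (continuous_abs.comp f.continuous) continuous_const
          have hQsub : Q ⊆ {y | |f y| ≤ 1/((n:ℝ)+1)} := by
            intro y hy
            simp only [Set.mem_setOf_eq]
            exact le_of_lt (hQs hy)
          refine ⟨{y | |f y| ≤ 1/((n:ℝ)+1)}, ⟨Q, hQ, hQsub⟩, ?_⟩
          rw [hclosed.closure_eq]
          intro h
          exact absurd h (not_le.mpr hn)
        intro n
        obtain ⟨m, hm⟩ := exists_nat_ge (M' * ((n:ℝ)+1))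
        obtain ⟨Q, hQ, hQs⟩ := hf m
        refine ⟨Q, hQ, fun z hz => ?_⟩
        simp only [Set.mem_setOf_eq, smul_eq_mul, ContinuousMap.mul_apply]
        by_cases hfz : f z = 0
        · rw [hfz, mul_zero, abs_zero]; positivity
        · have hc : |c z| ≤ M := hM z (hfN z hfz)
          have hfs : |f z| < 1/((m:ℝ)+1) := hQs hz
          have hle : |c z * f z| ≤ M' * |f z| := by
            rw [abs_mul]
            apply mul_le_mul_of_nonneg_right _ (abs_nonneg _)
            calc |c z| ≤ M := hc
              _ ≤ |M| := le_abs_self M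
              _ ≤ M' := by rw [hM']; linarith
          calc |c z * f z| ≤ M' * |f z| := hle
            _ < M' * (1/((m:ℝ)+1)) := by
                exact mul_lt_mul_of_pos_left hfs hM'pos
            _ ≤ 1/((n:ℝ)+1) := by
                rw [mul_one_div, div_le_div_iff₀ (by positivity) (by positivity)]
                nlinarith
    · rintro F ⟨Q, hQ, hQF⟩
      apply relBounded_mono _ hN2
      intro z hz
      exact ⟨F, ⟨Q, hQ, hQF⟩, hz⟩
  have h12 : ((∃ I : Ideal (ContinuousMap X ℝ), (I : Set (ContinuousMap X ℝ)) = S) ∧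
      (∀ F : Set X, (∃ Q ∈ P, Q ⊆ F) → IsRelBounded (closure F)ᶜ)) → IsRelBounded N := by
    rintro ⟨⟨I, hI⟩, hb⟩ g
    by_contra hcon
    obtain ⟨x, hxQex, hxg⟩ := hextract g hcon (fun n => (2:ℝ)^n)
    choose Q hQP hxQ using hxQex
    obtain ⟨ψ, hψ0, hψx, hψtail⟩ := exists_psi hbase Q hQP x hxQ
    have hψI : ψ ∈ I := by
      rw [← SetLike.mem_coe, hI]
      intro n
      obtain ⟨m, hm⟩ := exists_pow_lt_of_lt_one
        (show (0:ℝ) < 1/((n:ℝ)+1) by positivity) (show (2⁻¹:ℝ) < 1 by norm_num)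
      obtain ⟨R, hR, hRs⟩ := hψtail m
      refine ⟨R, hR, fun y hy => ?_⟩
      simp only [Set.mem_setOf_eq]
      rw [abs_of_nonneg (hψ0 y)]
      exact lt_of_le_of_lt (hRs y hy) hm
    set k : ContinuousMap X ℝ := (1 + g * g) * ψ with hk
    have hkI : k ∈ I := Ideal.mul_mem_left I _ hψI
    rw [← SetLike.mem_coe, hI] at hkI
    obtain ⟨R, hR, hRs⟩ := hkI 1
    set F : Set X := {y | |k y| ≤ (1:ℝ)/((1:ℕ)+1)} with hF
    have hFc : IsClosed F :=
      isClosed_le (continuous_abs.comp k.continuous) continuous_const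
    have hRsub : R ⊆ F := by
      intro y hy
      simp only [hF, Set.mem_setOf_eq]
      exact le_of_lt (hRs hy)
    have hFb := hb F ⟨R, hR, hRsub⟩
    rw [hFc.closure_eq] at hFb
    obtain ⟨M, hM⟩ := hFb g
    obtain ⟨n, hn⟩ := exists_nat_gt M
    have hone : (1:ℝ) ≤ (2:ℝ)^n := by
      calc (1:ℝ) = 1^n := (one_pow n).symm
        _ ≤ 2^n := pow_le_pow_left₀ (by norm_num) (by norm_num) n
    have hk1 : (1:ℝ) ≤ k (x n) := by
      have hgs : (2:ℝ)^n * (2:ℝ)^n ≤ g (x n) * g (x n) := by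
        have h1 := (hxg n).le
        calc (2:ℝ)^n*(2:ℝ)^n ≤ |g (x n)| * |g (x n)| :=
              mul_le_mul h1 h1 (by positivity) (abs_nonneg _)
          _ = g (x n) * g (x n) := abs_mul_abs_self _
      have hψn := hψx n
      have h2 : (2:ℝ)^n * (2⁻¹:ℝ)^n = 1 := by
        rw [← mul_pow]; norm_num
      simp only [hk, ContinuousMap.mul_apply, ContinuousMap.add_apply,
        ContinuousMap.one_apply]
      nlinarith [hψ0 (x n)]
    have hxF : x n ∈ Fᶜ := by
      simp only [hF, Set.mem_compl_iff, Set.mem_setOf_eq, not_le]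
      calc (1:ℝ)/((1:ℕ)+1) < 1 := by norm_num
        _ ≤ k (x n) := hk1
        _ ≤ |k (x n)| := le_abs_self _
    have hgM := hM (x n) hxF
    have h2n : (n:ℝ) < (2:ℝ)^n := by exact_mod_cast (Nat.lt_two_pow_self (n := n))
    linarith [hxg n]
  have h23 : IsRelBounded N →
      ∀ A : Set X, IsClosed A → IsFCGdelta P A → IsRelBounded Aᶜ := by
    intro hN2 A hAc hACG
    obtain ⟨B, hAeq, hBopen, hBQ, hBsep⟩ := hACG
    apply relBounded_mono _ hN2
    intro z hz
    rw [hAeq] at hz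
    simp only [Set.mem_compl_iff, Set.mem_iInter, not_forall] at hz
    obtain ⟨i, hi⟩ := hz
    obtain ⟨gi, hg0, hg1⟩ := hBsep i
    obtain ⟨Q, hQ, hQB⟩ := hBQ (i+1)
    refine ⟨B (i+1), ⟨Q, hQ, hQB⟩, fun hcl => ?_⟩
    have h0 := hg0 z hcl
    have h1 := hg1 z hi
    rw [h0] at h1
    exact zero_ne_one h1
  have h32 : (∀ A : Set X, IsClosed A → IsFCGdelta P A → IsRelBounded Aᶜ) →
      IsRelBounded N := by
    intro h3 g
    by_contra hcon
    obtain ⟨x, hxQex, hxg⟩ := hextract g hcon (fun n => (n:ℝ))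
    choose Q hQP hxQ using hxQex
    obtain ⟨ψ, hψ0, hψx, hψtail⟩ := exists_psi hbase Q hQP x hxQ
    set B : ℕ → Set X := fun i => {y | ψ y < (2⁻¹:ℝ)^i} with hB
    set A : Set X := ⋂ i, B i with hA
    have hAclosed : IsClosed A := by
      have hAeq : A = ψ ⁻¹' Set.Iic 0 := by
        ext z
        simp only [hA, hB, Set.mem_iInter, Set.mem_setOf_eq, Set.mem_preimage, Set.mem_Iic]
        constructor
        · intro h
          by_contra hpos
          push_neg at hpos
          obtain ⟨i, hi⟩ := exists_pow_lt_of_lt_one hpos (show (2⁻¹:ℝ) < 1 by norm_num)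
          exact absurd (h i) (not_lt.mpr hi.le)
        · intro h i
          exact lt_of_le_of_lt h (by positivity)
      rw [hAeq]
      exact IsClosed.preimage ψ.continuous isClosed_Iic
    have hFCG : IsFCGdelta P A := by
      refine ⟨B, hA, fun i => isOpen_lt ψ.continuous continuous_const,
        fun i => ?_, fun i => ?_⟩
      · obtain ⟨R, hR, hRs⟩ := hψtail (i+1)
        refine ⟨R, hR, fun y hy => ?_⟩
        simp only [hB, Set.mem_setOf_eq]
        calc ψ y ≤ (2⁻¹:ℝ)^(i+1) := hRs y hy
          _ < (2⁻¹:ℝ)^i := by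
            rw [pow_succ]
            nlinarith [pow_pos (by norm_num : (0:ℝ) < 2⁻¹) i]
      · refine ⟨⟨fun y => max 0 (min 1 ((2:ℝ)^(i+1) * ψ y - 1)),
          continuous_const.max (continuous_const.min
            ((continuous_const.mul ψ.continuous).sub continuous_const))⟩,
          fun z hz => ?_, fun z hz => ?_⟩
        · have hsub : closure (B (i+1)) ⊆ {y | ψ y ≤ (2⁻¹:ℝ)^(i+1)} := by
            apply closure_minimal _ (isClosed_le ψ.continuous continuous_const)
            intro y hy
            simp only [hB, Set.mem_setOf_eq] at hy ⊢
            exact le_of_lt hy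
          have hψz : ψ z ≤ (2⁻¹:ℝ)^(i+1) := hsub hz
          have ht : (2:ℝ)^(i+1) * ψ z - 1 ≤ 0 := by
            have h2 : (2:ℝ)^(i+1) * (2⁻¹:ℝ)^(i+1) = 1 := by rw [← mul_pow]; norm_num
            nlinarith [pow_pos (by norm_num : (0:ℝ) < 2) (i+1)]
          simp only [ContinuousMap.coe_mk]
          rw [max_eq_left]
          exact le_trans (min_le_right _ _) ht
        · have hψz : (2⁻¹:ℝ)^i ≤ ψ z := by
            simp only [hB, Set.mem_setOf_eq, not_lt] at hz
            exact hz
          have ht : (1:ℝ) ≤ (2:ℝ)^(i+1) * ψ z - 1 := by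
            have h2 : (2:ℝ)^(i+1) * (2⁻¹:ℝ)^i = 2 := by
              rw [pow_succ, mul_comm ((2:ℝ)^i) 2, mul_assoc, ← mul_pow]
              norm_num
            nlinarith [pow_pos (by norm_num : (0:ℝ) < 2) (i+1)]
          simp only [ContinuousMap.coe_mk]
          rw [min_eq_left ht, max_eq_right (by norm_num : (0:ℝ) ≤ 1)]
    obtain ⟨M, hM⟩ := h3 A hAclosed hFCG g
    obtain ⟨n, hn⟩ := exists_nat_gt M
    have hxA : x n ∈ Aᶜ := by
      simp only [hA, hB, Set.mem_compl_iff, Set.mem_iInter, Set.mem_setOf_eq, not_forall]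
      exact ⟨n, not_lt.mpr (hψx n)⟩
    have := hM (x n) hxA
    linarith [hxg n]
  exact ⟨⟨h12, h21⟩, ⟨h23, h32⟩⟩
end

section
/- If X is pseudocompact, then for every open filter base P on X, C_{∞P}(X) is an ideal of C(X). -/
/-- if `X` is pseudocompact then `C_{∞P}(X)` is an ideal of `C(X)` for every
open filter base `P`. -/
theorem pseudocompact_cInfP_ideal {X : Type*} [TopologicalSpace X] [T2Space X]
    [CompletelyRegularSpace X]
    (hpc : ∀ f : ContinuousMap X ℝ, ∃ M : ℝ, ∀ x, |f x| ≤ M)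
    (P : Set (Set X)) (hne : P.Nonempty)
    (hopen : ∀ A ∈ P, IsOpen A) (hAne : ∀ A ∈ P, A.Nonempty)
    (hbase : ∀ A ∈ P, ∀ B ∈ P, ∃ C ∈ P, C ⊆ A ∩ B) :
    ∃ I : Ideal (ContinuousMap X ℝ), (I : Set (ContinuousMap X ℝ)) =
      {f : ContinuousMap X ℝ | ∀ n : ℕ, ∃ Q ∈ P, Q ⊆ {x | |f x| < (1 : ℝ) / (n + 1)}} := by
  refine ⟨⟨⟨⟨_, ?_⟩, ?_⟩, ?_⟩, rfl⟩
  · intro a b ha hb n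
    obtain ⟨Qa, hQa, hsa⟩ := ha (2 * n + 1)
    obtain ⟨Qb, hQb, hsb⟩ := hb (2 * n + 1)
    obtain ⟨C, hC, hCs⟩ := hbase _ hQa _ hQb
    refine ⟨C, hC, fun x hx => ?_⟩
    have h1 := hsa (hCs hx).1
    have h2 := hsb (hCs hx).2
    simp only [Set.mem_setOf_eq, ContinuousMap.add_apply] at *
    have key : (1 : ℝ) / (2 * n + 1 + 1) + 1 / (2 * n + 1 + 1) = 1 / (n + 1) := by
      have hn : (n : ℝ) + 1 ≠ 0 := by positivity
      field_simp
      ring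
    calc |a x + b x| ≤ |a x| + |b x| := abs_add_le _ _
      _ < 1 / (2 * ↑n + 1 + 1) + 1 / (2 * ↑n + 1 + 1) := by
          push_cast at h1 h2 ⊢; linarith
      _ = 1 / (n + 1) := key
  · intro n
    obtain ⟨Q, hQ⟩ := hne
    exact ⟨Q, hQ, fun x _ => by simp; positivity⟩
  · intro c f hf n
    obtain ⟨M, hM⟩ := hpc c
    obtain ⟨Q0, hQ0⟩ := hne
    obtain ⟨x0, _⟩ := hAne _ hQ0
    have hM0 : 0 ≤ M := le_trans (abs_nonneg _) (hM x0)
    obtain ⟨m, hm⟩ := exists_nat_gt (M * (n + 1))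
    obtain ⟨Q, hQ, hs⟩ := hf m
    refine ⟨Q, hQ, fun x hx => ?_⟩
    have hfx := hs hx
    simp only [Set.mem_setOf_eq, smul_eq_mul, ContinuousMap.mul_apply] at *
    have hmpos : (0 : ℝ) < m + 1 := by positivity
    have hnpos : (0 : ℝ) < n + 1 := by positivity
    calc |c x * f x| = |c x| * |f x| := abs_mul _ _
      _ ≤ M * (1 / (m + 1)) :=
          mul_le_mul (hM x) (le_of_lt hfx) (abs_nonneg _) hM0
      _ < 1 / (n + 1) := by
          rw [mul_one_div, div_lt_div_iff₀ hmpos hnpos]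
          nlinarith
end

section
/- Let X be infinite and P = {A ⊊ X : X∖A finite}. Then C_{∞P}(X) is an ideal of C(X) if and only if the set of isolated points of X is bounded (relatively pseudocompact). -/
open Set

/-- Membership in `C_{∞P}(X)` (via cofinite proper subsets) is equivalent to all superlevel
sets being finite. -/
private lemma cInfP_mem_iff {X : Type*} [TopologicalSpace X] [Infinite X] (f : X → ℝ) :
    (∀ n : ℕ, ∃ A ∈ {A : Set X | A ≠ Set.univ ∧ Aᶜ.Finite},
        A ⊆ {x | |f x| < (1 : ℝ) / (n + 1)}) ↔
    (∀ ε : ℝ, 0 < ε → {x | ε ≤ |f x|}.Finite) := by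
  constructor
  · intro h ε hε
    obtain ⟨n, hn⟩ := exists_nat_one_div_lt hε
    obtain ⟨A, ⟨_, hA2⟩, hA3⟩ := h n
    refine hA2.subset fun x hx => ?_
    intro hxA
    have := hA3 hxA
    simp only [mem_setOf_eq] at hx this
    linarith
  · intro h n
    have hε : (0:ℝ) < 1 / (n + 1) := by positivity
    have hfin : {x | (1:ℝ)/(n+1) ≤ |f x|}.Finite := h _ hε
    set B : Set X := {x | |f x| < (1:ℝ)/(n+1)} with hB
    have hBc : Bᶜ = {x | (1:ℝ)/(n+1) ≤ |f x|} := by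
      ext x; simp [hB, not_lt]
    have hBcf : Bᶜ.Finite := by rw [hBc]; exact hfin
    have hBinf : B.Infinite := by
      have := hBcf.infinite_compl
      rwa [compl_compl] at this
    obtain ⟨p, hp⟩ := hBinf.nonempty
    refine ⟨B \ {p}, ⟨?_, ?_⟩, diff_subset⟩
    · intro hu
      have : p ∈ B \ {p} := hu ▸ mem_univ p
      simp at this
    · have : (B \ {p})ᶜ = Bᶜ ∪ {p} := by
        rw [diff_eq, compl_inter, compl_compl]
      rw [this]
      exact hBcf.union (finite_singleton p)

/-- If all superlevel sets of a continuous `f` are finite, every point where `f` is nonzero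
is isolated. -/
private lemma isolated_of_ne_zero {X : Type*} [TopologicalSpace X] [T1Space X]
    (f : ContinuousMap X ℝ) (hf : ∀ ε : ℝ, 0 < ε → {x | ε ≤ |f x|}.Finite)
    (y : X) (hy : f y ≠ 0) : IsOpen ({y} : Set X) := by
  have hpos : 0 < |f y| / 2 := by positivity
  set U : Set X := {z | |f y| / 2 < |f z|} with hU
  have hUopen : IsOpen U := by
    have : Continuous fun z => |f z| := f.continuous.abs
    exact isOpen_lt continuous_const this
  have hUfin : U.Finite := (hf _ hpos).subset fun z hz => by
    simp only [hU, mem_setOf_eq] at hz ⊢; linarith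
  have hyU : y ∈ U := by simp only [hU, mem_setOf_eq]; linarith [abs_nonneg (f y)]
  have hcl : IsClosed (U \ {y}) := (hUfin.subset diff_subset).isClosed
  have : ({y} : Set X) = U \ (U \ {y}) := by
    ext z
    simp only [mem_singleton_iff, mem_diff, not_and, not_not]
    constructor
    · rintro rfl; exact ⟨hyU, fun _ => rfl⟩
    · rintro ⟨hz, h2⟩; exact h2 hz
  rw [this]
  exact hUopen.sdiff hcl

/-- A function vanishing off isolated points with finite superlevel sets is continuous. -/
private lemma continuous_of_isolated_support {X : Type*} [TopologicalSpace X] [T1Space X]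
    (f : X → ℝ) (h1 : ∀ y, f y ≠ 0 → IsOpen ({y} : Set X))
    (h2 : ∀ ε : ℝ, 0 < ε → {x | ε ≤ |f x|}.Finite) : Continuous f := by
  rw [continuous_iff_continuousAt]
  intro y
  by_cases hy : IsOpen ({y} : Set X)
  · have : (nhds y) = pure y := (isOpen_singleton_iff_nhds_eq_pure y).mp hy
    unfold ContinuousAt
    rw [this]
    exact tendsto_pure_nhds f y
  · have hy0 : f y = 0 := by
      by_contra h
      exact hy (h1 y h)
    rw [ContinuousAt, hy0, Metric.tendsto_nhds]
    intro ε hε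
    have hfin := h2 ε hε
    have hopen : IsOpen {x | ε ≤ |f x|}ᶜ := hfin.isClosed.isOpen_compl
    have hmem : y ∈ {x | ε ≤ |f x|}ᶜ := by
      simp only [mem_compl_iff, mem_setOf_eq, not_le, hy0, abs_zero]
      exact hε
    filter_upwards [hopen.mem_nhds hmem] with z hz
    simp only [mem_compl_iff, mem_setOf_eq, not_le] at hz
    rwa [Real.dist_eq, sub_zero]

/-- for `P` the cofinite proper subsets of an infinite space, `C_{∞P}(X)` is
an ideal of `C(X)` iff the set of isolated points is bounded (relatively pseudocompact). -/
theorem cInfP_cofinite_ideal_iff {X : Type*} [TopologicalSpace X] [T2Space X]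
    [CompletelyRegularSpace X] [Infinite X] :
    (∃ I : Ideal (ContinuousMap X ℝ), (I : Set (ContinuousMap X ℝ)) =
      {f : ContinuousMap X ℝ | ∀ n : ℕ, ∃ A ∈ {A : Set X | A ≠ Set.univ ∧ Aᶜ.Finite},
        A ⊆ {x | |f x| < (1 : ℝ) / (n + 1)}}) ↔
    (∀ f : ContinuousMap X ℝ, ∃ M : ℝ, ∀ x ∈ {x : X | IsOpen ({x} : Set X)}, |f x| ≤ M) := by
  constructor
  · -- forward: if the ideal exists, isolated points are bounded
    rintro ⟨I, hI⟩
    by_contra hb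
    push_neg at hb
    obtain ⟨g, hg⟩ := hb
    simp only [mem_setOf_eq, not_le] at hg
    have hc : ∀ M : ℝ, ∃ z : X, IsOpen ({z} : Set X) ∧ M < |g z| := by
      intro M
      obtain ⟨z, hz1, hz2⟩ := hg M
      exact ⟨z, hz1, hz2⟩
    choose pick hpick1 hpick2 using hc
    -- build a sequence of isolated points with strictly increasing |g| values
    let x : ℕ → X := fun n => Nat.rec (pick 0) (fun n xn => pick (max (n + 1 : ℝ) |g xn|)) n
    have hxsucc : ∀ n, x (n + 1) = pick (max (n + 1 : ℝ) |g (x n)|) := fun n => rfl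
    have hiso : ∀ n, IsOpen ({x n} : Set X) := by
      intro n
      cases n with
      | zero => exact hpick1 0
      | succ m => rw [hxsucc]; exact hpick1 _
    have hgt : ∀ n : ℕ, (n : ℝ) < |g (x n)| := by
      intro n
      cases n with
      | zero => show ((0:ℕ):ℝ) < |g (pick 0)|; simpa using hpick2 0
      | succ m =>
        have := hpick2 (max (m + 1 : ℝ) |g (x m)|)
        rw [← hxsucc] at this
        push_cast
        exact lt_of_le_of_lt (le_max_left _ _) this
    have hmono : StrictMono fun n => |g (x n)| := by
      apply strictMono_nat_of_lt_succ
      intro n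
      have := hpick2 (max (n + 1 : ℝ) |g (x n)|)
      rw [← hxsucc] at this
      exact lt_of_le_of_lt (le_max_right _ _) this
    have hinj : Function.Injective x := by
      intro a b hab
      exact hmono.injective (by rw [hab])
    -- the witness function
    set f0 : X → ℝ := Set.indicator (Set.range x) (fun y => 1 / (1 + |g y|)) with hf0
    have hf0x : ∀ n, f0 (x n) = 1 / (1 + |g (x n)|) := by
      intro n
      rw [hf0, indicator_of_mem (mem_range_self n)]
    have hf0ne : ∀ y, f0 y ≠ 0 → y ∈ Set.range x := by
      intro y hy
      by_contra h
      exact hy (indicator_of_notMem h _)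
    have hsup : ∀ ε : ℝ, 0 < ε → {y | ε ≤ |f0 y|}.Finite := by
      intro ε hε
      have hsub : {y | ε ≤ |f0 y|} ⊆ x '' {n : ℕ | (n : ℝ) < 1 / ε} := by
        intro y hy
        simp only [mem_setOf_eq] at hy
        have hne : f0 y ≠ 0 := by
          intro h; rw [h, abs_zero] at hy; linarith
        obtain ⟨n, rfl⟩ := hf0ne y hne
        refine ⟨n, ?_, rfl⟩
        rw [hf0x] at hy
        have hpos : (0:ℝ) < 1 + |g (x n)| := by positivity
        rw [abs_of_nonneg (by positivity)] at hy
        have h1 : ε * (1 + |g (x n)|) ≤ 1 := by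
          rw [le_div_iff₀ hpos] at hy; linarith [hy]
        have h2 : (n : ℝ) < |g (x n)| := hgt n
        simp only [mem_setOf_eq]
        have : ε * (1 + (n:ℝ)) < ε * (1 + |g (x n)|) := by
          apply mul_lt_mul_of_pos_left _ hε
          linarith
        rw [lt_div_iff₀ hε]
        nlinarith [Nat.cast_nonneg (α := ℝ) n]
      exact (Set.Finite.image x (Set.finite_Iio ⌈1/ε⌉₊ |>.subset (fun n hn => by
        simp only [mem_setOf_eq] at hn
        exact Nat.lt_ceil.mpr hn))).subset hsub
    have hcont : Continuous f0 :=
      continuous_of_isolated_support f0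
        (fun y hy => by obtain ⟨n, rfl⟩ := hf0ne y hy; exact hiso n) hsup
    set f : ContinuousMap X ℝ := ⟨f0, hcont⟩ with hfdef
    have hfmem : f ∈ I := by
      have : f ∈ (I : Set (ContinuousMap X ℝ)) := by
        rw [hI]
        exact (cInfP_mem_iff f0).mpr hsup
      exact this
    have hgf : g * f ∈ I := I.mul_mem_left g hfmem
    have hgfS : ∀ ε : ℝ, 0 < ε → {y | ε ≤ |(g * f) y|}.Finite := by
      have : g * f ∈ (I : Set (ContinuousMap X ℝ)) := hgf
      rw [hI] at this
      exact (cInfP_mem_iff _).mp this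
    have hfin : {y | (1:ℝ)/2 ≤ |(g * f) y|}.Finite := hgfS _ (by norm_num)
    have hsub : Set.range (fun n => x (n + 1)) ⊆ {y | (1:ℝ)/2 ≤ |(g * f) y|} := by
      rintro _ ⟨n, rfl⟩
      simp only [mem_setOf_eq, ContinuousMap.mul_apply]
      have hfx : f (x (n+1)) = 1 / (1 + |g (x (n+1))|) := hf0x (n+1)
      have h1 : (1:ℝ) ≤ |g (x (n+1))| := by
        have := hgt (n+1)
        push_cast at this
        linarith [Nat.cast_nonneg (α := ℝ) n]
      have hpos : (0:ℝ) < 1 + |g (x (n+1))| := by positivity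
      rw [abs_mul, hfx,
        abs_of_nonneg (by positivity : (0:ℝ) ≤ 1 / (1 + |g (x (n+1))|)),
        mul_one_div, le_div_iff₀ hpos]
      linarith
    have hinf : (Set.range fun n => x (n + 1)).Infinite :=
      Set.infinite_range_of_injective (fun a b hab => by
        exact Nat.succ_injective (hinj hab))
    exact (hinf.mono hsub) hfin
  · -- backward: bound on isolated points gives the ideal
    intro hb
    refine ⟨⟨⟨⟨{f : ContinuousMap X ℝ | ∀ n : ℕ, ∃ A ∈ {A : Set X | A ≠ Set.univ ∧ Aᶜ.Finite},
        A ⊆ {x | |f x| < (1 : ℝ) / (n + 1)}}, ?_⟩, ?_⟩, ?_⟩, rfl⟩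
    · -- add_mem
      intro a b ha hb'
      have ha' : ∀ ε : ℝ, 0 < ε → {x | ε ≤ |a x|}.Finite := (cInfP_mem_iff _).mp ha
      have hb2 : ∀ ε : ℝ, 0 < ε → {x | ε ≤ |b x|}.Finite := (cInfP_mem_iff _).mp hb'
      refine (cInfP_mem_iff (⇑(a + b))).mpr fun ε hε => ?_
      have h2 : (0:ℝ) < ε / 2 := by linarith
      refine ((ha' _ h2).union (hb2 _ h2)).subset fun y hy => ?_
      simp only [mem_setOf_eq, mem_union] at hy ⊢
      by_contra h
      push_neg at h
      obtain ⟨h1', h2'⟩ := h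
      have := abs_add_le (a y) (b y)
      simp only [ContinuousMap.add_apply] at hy
      linarith
    · -- zero_mem
      refine (cInfP_mem_iff (⇑(0 : ContinuousMap X ℝ))).mpr fun ε hε => ?_
      refine Set.finite_empty.subset fun y hy => ?_
      simp only [mem_setOf_eq, ContinuousMap.zero_apply, abs_zero] at hy
      linarith
    · -- smul_mem
      intro c f hf
      have hf' : ∀ ε : ℝ, 0 < ε → {x | ε ≤ |f x|}.Finite := (cInfP_mem_iff _).mp hf
      refine (cInfP_mem_iff (⇑(c • f))).mpr ?_
      obtain ⟨M, hM⟩ := hb c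
      set M' : ℝ := max M 1 with hM'
      have hM'pos : (0:ℝ) < M' := lt_of_lt_of_le one_pos (le_max_right _ _)
      intro ε hε
      have hεM : (0:ℝ) < ε / M' := by positivity
      refine (hf' _ hεM).subset fun y hy => ?_
      simp only [mem_setOf_eq] at hy ⊢
      have hcy : (c • f) y = c y * f y := by
        simp [smul_eq_mul]
      rw [hcy, abs_mul] at hy
      have hfy : f y ≠ 0 := by
        intro h
        rw [h, abs_zero, mul_zero] at hy
        linarith
      have hiso : IsOpen ({y} : Set X) := isolated_of_ne_zero f hf' y hfy
      have hcyM : |c y| ≤ M' := le_trans (hM y hiso) (le_max_left _ _)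
      rw [div_le_iff₀ hM'pos]
      calc ε ≤ |c y| * |f y| := hy
        _ ≤ M' * |f y| := by
            apply mul_le_mul_of_nonneg_right hcyM (abs_nonneg _)
        _ = |f y| * M' := mul_comm _ _
end

section
/- An ideal E of the ring C_{∞P}(X) is essential in C_{∞P}(X) if and only if there is no subset V of X with X∖V ∈ F, int V ≠ ∅, and V ⊆ ⋂_{f∈E} Z(f). -/
/-- an ideal `E` of `C_{∞P}(X)` is essential iff `⋂ Z[E]` contains no set `V`
with `X∖V ∈ F` and `int V ≠ ∅`. Essentiality is expressed as: every nonzero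
`f ∈ C_{∞P}(X)` admits `g ∈ E` with `fg ≠ 0`. -/
theorem essential_ideal_cInfP_iff {X : Type*} [TopologicalSpace X] [T2Space X]
    [CompletelyRegularSpace X]
    (P : Set (Set X)) (hne : P.Nonempty)
    (hopen : ∀ A ∈ P, IsOpen A) (hAne : ∀ A ∈ P, A.Nonempty)
    (hbase : ∀ A ∈ P, ∀ B ∈ P, ∃ C ∈ P, C ⊆ A ∩ B)
    (E : Set (ContinuousMap X ℝ))
    (hE0 : (0 : ContinuousMap X ℝ) ∈ E)
    (hEsub : E ⊆ {f | ∀ n : ℕ, ∃ Q ∈ P, Q ⊆ {x | |f x| < 1 / (n + 1)}})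
    (hEadd : ∀ f ∈ E, ∀ g ∈ E, f + g ∈ E)
    (hEmul : ∀ f ∈ {f : ContinuousMap X ℝ | ∀ n : ℕ, ∃ Q ∈ P, Q ⊆ {x | |f x| < 1 / (n + 1)}},
      ∀ g ∈ E, f * g ∈ E) :
    (∀ f ∈ {f : ContinuousMap X ℝ | ∀ n : ℕ, ∃ Q ∈ P, Q ⊆ {x | |f x| < 1 / (n + 1)}},
      f ≠ 0 → ∃ g ∈ E, f * g ≠ 0) ↔
    ¬ ∃ V : Set X, (∃ Q ∈ P, Q ⊆ Vᶜ) ∧ (interior V).Nonempty ∧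
        ∀ g ∈ E, V ⊆ {x | g x = 0} := by
  constructor
  · rintro hess ⟨V, ⟨Q, hQP, hQV⟩, ⟨x₀, hx₀⟩, hVZ⟩
    obtain ⟨φ, hφc, hφ0, hφ1⟩ := CompletelyRegularSpace.completely_regular x₀ (interior V)ᶜ
      isOpen_interior.isClosed_compl (by simpa using hx₀)
    set f : ContinuousMap X ℝ := ⟨fun y => 1 - (φ y : ℝ), continuous_const.sub (continuous_subtype_val.comp hφc)⟩ with hfdef
    have hf0 : ∀ y , y ∉ interior V → f y = 0 := by
      intro y hy
      have : φ y = 1 := hφ1 hy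
      simp [hfdef, this]
    have hfmem : f ∈ {f : ContinuousMap X ℝ | ∀ n : ℕ, ∃ Q ∈ P, Q ⊆ {x | |f x| < 1 / (n + 1)}} := by
      intro n
      refine ⟨Q, hQP, fun x hx => ?_⟩
      rw [Set.mem_setOf_eq, hf0 x (fun h => (hQV hx) (interior_subset h)), abs_zero]
      positivity
    have hfne : f ≠ 0 := by
      intro h
      have := congrArg (fun g : ContinuousMap X ℝ => g x₀) h
      simp [hfdef, hφ0] at this
    obtain ⟨g, hgE, hfg⟩ := hess f hfmem hfne
    apply hfg
    ext x
    by_cases hx : x ∈ V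
    · have := hVZ g hgE hx
      simp only [Set.mem_setOf_eq] at this
      simp [this]
    · simp [hf0 x (fun h => hx (interior_subset h))]
  · intro hV f hf hfne
    by_contra h
    push_neg at h
    obtain ⟨x₀, hx₀⟩ : ∃ x, f x ≠ 0 := by
      by_contra hc; push_neg at hc; exact hfne (ContinuousMap.ext hc)
    obtain ⟨n, hn⟩ := exists_nat_one_div_lt (show (0:ℝ) < |f x₀| from abs_pos.2 hx₀)
    apply hV
    refine ⟨{x | 1/(n+1) < |f x|}, ?_, ?_, ?_⟩
    · obtain ⟨Q, hQP, hQ⟩ := hf n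
      refine ⟨Q, hQP, fun x hx => ?_⟩
      simp only [Set.mem_compl_iff, Set.mem_setOf_eq, not_lt]
      exact le_of_lt (hQ hx)
    · have ho : IsOpen {x | 1/((n:ℝ)+1) < |f x|} :=
        isOpen_lt continuous_const (f.continuous.abs)
      rw [ho.interior_eq]
      exact ⟨x₀, hn⟩
    · intro g hgE x hx
      have hmul := h g hgE
      have hfg : f x * g x = 0 := by
        have := congrArg (fun k : ContinuousMap X ℝ => k x) hmul
        simpa using this
      have hfx : f x ≠ 0 := by
        have hpos : (0:ℝ) < |f x| := lt_trans (by positivity) hx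
        exact abs_pos.1 hpos
      exact (mul_eq_zero.1 hfg).resolve_left hfx
end

section
/- C^P(X) is an essential ideal of C(X) if and only if the family {V ⊆ X : V open and X∖V ∈ F} is a π-base for X (every nonempty open set contains a nonempty member of this family). -/
open Set

/-- Bump function: given `x` in an open set `U`, a continuous real function equal to `1`
at `x` and vanishing outside `U`. -/
lemma exists_bump {X : Type*} [TopologicalSpace X] [T2Space X] [CompletelyRegularSpace X]
    {U : Set X} (hU : IsOpen U) {x : X} (hx : x ∈ U) :
    ∃ h : ContinuousMap X ℝ, h x = 1 ∧ ∀ y ∉ U, h y = 0 := by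
  obtain ⟨f, cf, hfx, hfK⟩ := CompletelyRegularSpace.completely_regular x Uᶜ
    hU.isClosed_compl (by simpa using hx)
  refine ⟨⟨fun y => 1 - (f y : ℝ), by continuity⟩, ?_, ?_⟩
  · simp [hfx]
  · intro y hy
    have := hfK (by simpa using hy)
    simp [this]

/-- `C^P(X)` is an essential ideal of `C(X)` iff the open sets whose
complement belongs to `F` form a `π`-base for `X`. -/
theorem cP_essential_iff_pi_base {X : Type*} [TopologicalSpace X] [T2Space X]
    [CompletelyRegularSpace X]
    (P : Set (Set X)) (hne : P.Nonempty)
    (hopen : ∀ A ∈ P, IsOpen A) (hAne : ∀ A ∈ P, A.Nonempty)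
    (hbase : ∀ A ∈ P, ∀ B ∈ P, ∃ C ∈ P, C ⊆ A ∩ B) :
    (∀ g : ContinuousMap X ℝ, g ≠ 0 → ∃ k : ContinuousMap X ℝ,
      g * k ∈ {f : ContinuousMap X ℝ | ∃ Q ∈ P, Q ⊆ {x | f x = 0}} ∧ g * k ≠ 0) ↔
    (∀ U : Set X, IsOpen U → U.Nonempty →
      ∃ V : Set X, IsOpen V ∧ V.Nonempty ∧ V ⊆ U ∧ ∃ Q ∈ P, Q ⊆ Vᶜ) := by
  constructor
  · intro hess U hUopen ⟨x, hx⟩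
    obtain ⟨g, hgx, hg0⟩ := exists_bump hUopen hx
    have hgne : g ≠ 0 := by
      intro h
      have : g x = 0 := by rw [h]; rfl
      rw [hgx] at this; norm_num at this
    obtain ⟨k, ⟨Q, hQP, hQ⟩, hgk⟩ := hess g hgne
    refine ⟨{y | (g * k) y ≠ 0}, ?_, ?_, ?_, Q, hQP, ?_⟩
    · exact isOpen_ne.preimage (g * k).continuous
    · obtain ⟨y, hy⟩ := DFunLike.ne_iff.mp hgk
      exact ⟨y, by simpa using hy⟩
    · intro y hy
      by_contra hyU
      exact hy (by simp [hg0 y hyU])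
    · intro y hy
      simp only [mem_compl_iff, mem_setOf_eq, not_not]
      exact hQ hy
  · intro hpi g hg
    obtain ⟨x, hx⟩ := DFunLike.ne_iff.mp hg
    have hx' : g x ≠ 0 := by simpa using hx
    have hUopen : IsOpen {y | g y ≠ 0} := isOpen_ne.preimage g.continuous
    obtain ⟨V, hVopen, ⟨v, hv⟩, hVU, Q, hQP, hQV⟩ := hpi _ hUopen ⟨x, hx'⟩
    obtain ⟨k, hkv, hk0⟩ := exists_bump hVopen hv
    refine ⟨k, ⟨Q, hQP, ?_⟩, ?_⟩
    · intro y hy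
      have : k y = 0 := hk0 y (hQV hy)
      simp [this]
    · intro h
      have : (g * k) v = 0 := by rw [h]; rfl
      simp only [ContinuousMap.mul_apply, hkv, mul_one] at this
      exact hVU hv this
end
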